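/- arXiv:1911.09640 — 4 statements merged into one kernel-verified Lean document; each statement's English description precedes it below -/
import Mathlib

section
/- Let k ≥ 3 be an integer, let 0 < c < 1 and 0 < ε < 1 − c. There exists n_0 = n_0(c, ε, k) such that for every even n ≥ n_0, every (k−1)-regular graph G on n vertices, every natural number g with 3 ≤ g ≤ c·log_{k−1}(n), every run G_0 = G, G_1, G_2, … of the (G,g,k)-high-girth process, and every integer t with 0 ≤ t ≤ T := (n − n^{c+ε})/2, the following hold: (1) |W(G_t)| = n − 2t; (2) every vertex v ∈ W(G_t) lies in at least |W(G_t)| − 1 − 2k·n^c available pairs of G_t; (3) |𝒜(G_t)| ≥ (1/2)·|W(G_t)|·(|W(G_t)| − 1 − 2k·n^c); (4) 𝒜(G_t) ≠ ∅ whenever t < T, so the run does not freeze before step T (i.e., G_{t+1} ≠ G_t for all t < T). -/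
open scoped Classical

noncomputable section

namespace HG

variable {n : ℕ}

/-- The set of unsaturated vertices of `Γ`: vertices of minimum degree. -/
def unsat (Γ : SimpleGraph (Fin n)) : Finset (Fin n) :=
  Finset.univ.filter fun v => Γ.degree v = Γ.minDegree

/-- `u, v` form an available pair: both unsaturated, distinct, at distance at least `g - 1`. -/
def AvailRel (g : ℕ) (Γ : SimpleGraph (Fin n)) (u v : Fin n) : Prop :=
  u ≠ v ∧ u ∈ unsat Γ ∧ v ∈ unsat Γ ∧ ((g - 1 : ℕ) : ℕ∞) ≤ Γ.edist u v

/-- Ordered available pairs. -/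
def avail (g : ℕ) (Γ : SimpleGraph (Fin n)) : Finset (Fin n × Fin n) :=
  Finset.univ.filter fun p => AvailRel g Γ p.1 p.2

/-- Unordered available pairs, i.e. the set `𝒜(Γ)`. -/
def availSym (g : ℕ) (Γ : SimpleGraph (Fin n)) : Finset (Sym2 (Fin n)) :=
  (avail g Γ).image fun p => s(p.1, p.2)

/-- `Γ` plus the edge `uv`. -/
def addEdge (Γ : SimpleGraph (Fin n)) (u v : Fin n) : SimpleGraph (Fin n) :=
  Γ ⊔ SimpleGraph.fromEdgeSet {s(u, v)}

/-- One step of the `(G,g,k)`-high-girth process: if `Γ` is `k`-regular or no pair is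
available, stay put; otherwise add a uniformly random available pair as an edge.
(The uniform choice is made over ordered pairs, which induces the uniform distribution
over unordered available pairs.) -/
def step (k g : ℕ) (Γ : SimpleGraph (Fin n)) : PMF (SimpleGraph (Fin n)) :=
  if h : Γ.IsRegularOfDegree k ∨ avail g Γ = ∅ then PMF.pure Γ
  else (PMF.uniformOfFinset (avail g Γ)
      (Finset.nonempty_iff_ne_empty.2 fun he => h (Or.inr he))).map
    fun p => addEdge Γ p.1 p.2

/-- The distribution of the trajectory `(G_0, G_1, …, G_T)` of the `(G,g,k)`-high-girth
process, recorded as a function `ℕ → SimpleGraph (Fin n)` whose values beyond time `T`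
are irrelevant (equal to `G`). -/
def traj (k g : ℕ) (G : SimpleGraph (Fin n)) : ℕ → PMF (ℕ → SimpleGraph (Fin n))
  | 0 => PMF.pure fun _ => G
  | T + 1 => (traj k g G T).bind fun f =>
      (step k g (f T)).map fun Γ => Function.update f (T + 1) Γ

/-- `f` is a run of the `(G,g,k)`-high-girth process. -/
def IsRun (k g : ℕ) (G : SimpleGraph (Fin n)) (f : ℕ → SimpleGraph (Fin n)) : Prop :=
  f 0 = G ∧ ∀ t : ℕ,
    if (f t).IsRegularOfDegree k ∨ avail g (f t) = ∅ then f (t + 1) = f t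
    else ∃ p ∈ avail g (f t), f (t + 1) = addEdge (f t) p.1 p.2

end HG


namespace HG
variable {n : ℕ}


lemma exists_adj_edist (Γ : SimpleGraph (Fin n)) {v u : Fin n} {d : ℕ}
    (h : Γ.edist v u = (d + 1 : ℕ)) : ∃ w, Γ.Adj u w ∧ Γ.edist v w = d := by
  have h' : Γ.edist u v = ((d + 1 : ℕ) : ℕ∞) := by rw [Γ.edist_comm]; exact_mod_cast h
  obtain ⟨p, hp⟩ := SimpleGraph.exists_walk_of_edist_eq_coe h'
  cases p with
  | nil => simp at hp
  | @cons _ w _ ha q =>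
    refine ⟨w, ha, ?_⟩
    have hq : q.length = d := by simpa using hp
    have hle : Γ.edist v w ≤ d := by
      have := SimpleGraph.edist_le q.reverse
      simpa [hq] using this
    have hge : (d : ℕ∞) ≤ Γ.edist v w := by
      have htri : Γ.edist v u ≤ Γ.edist v w + Γ.edist w u := SimpleGraph.edist_triangle
      have hwu : Γ.edist w u ≤ 1 := by
        have := SimpleGraph.edist_le ha.symm.toWalk
        simpa using this
      have : ((d : ℕ∞) + 1) ≤ Γ.edist v w + 1 := by
        calc ((d : ℕ∞) + 1) = Γ.edist v u := by rw [h]; push_cast; ring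
        _ ≤ Γ.edist v w + Γ.edist w u := htri
        _ ≤ Γ.edist v w + 1 := add_le_add (le_refl _) hwu
      exact (ENat.add_le_add_iff_right (by simp)).mp this
    exact le_antisymm hle hge

/-- sphere of radius d -/
def sph (Γ : SimpleGraph (Fin n)) (v : Fin n) (d : ℕ) : Finset (Fin n) :=
  Finset.univ.filter fun u => Γ.edist v u = (d : ℕ∞)

lemma sph_zero (Γ : SimpleGraph (Fin n)) (v : Fin n) : sph Γ v 0 = {v} := by
  ext u
  simp only [sph, Finset.mem_filter, Finset.mem_univ, true_and, Finset.mem_singleton,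
    Nat.cast_zero, SimpleGraph.edist_eq_zero_iff]
  exact eq_comm

lemma card_sph_one {k : ℕ} (Γ : SimpleGraph (Fin n)) (v : Fin n)
    (hdeg : ∀ u, Γ.degree u ≤ k) : (sph Γ v 1).card ≤ k := by
  have : sph Γ v 1 ⊆ Γ.neighborFinset v := by
    intro u hu
    simp only [sph, Finset.mem_filter] at hu
    rw [SimpleGraph.mem_neighborFinset]
    exact_mod_cast SimpleGraph.edist_eq_one_iff_adj.mp (by exact_mod_cast hu.2)
  exact le_trans (Finset.card_le_card this) (hdeg v)

lemma card_sph_succ {k : ℕ} (hk : 1 ≤ k) (Γ : SimpleGraph (Fin n)) (v : Fin n) {d : ℕ}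
    (hd : 1 ≤ d) (hdeg : ∀ u, Γ.degree u ≤ k) :
    (sph Γ v (d + 1)).card ≤ (k - 1) * (sph Γ v d).card := by
  set f : Fin n → Fin n := fun u =>
    if h : ∃ w, Γ.Adj u w ∧ Γ.edist v w = d then h.choose else v with hf
  have hmaps : ∀ u ∈ sph Γ v (d + 1), f u ∈ sph Γ v d ∧ Γ.Adj u (f u) := by
    intro u hu
    simp only [sph, Finset.mem_filter] at hu
    have hex : ∃ w, Γ.Adj u w ∧ Γ.edist v w = d := exists_adj_edist Γ (by exact_mod_cast hu.2)
    rw [hf]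
    simp only [dif_pos hex]
    obtain ⟨h1, h2⟩ := hex.choose_spec
    exact ⟨by simp [sph, h2], h1⟩
  -- image is inside sph d
  have key : ∀ b ∈ (sph Γ v (d+1)).image f,
      ((sph Γ v (d+1)).filter fun a => f a = b).card ≤ k - 1 := by
    intro b hb
    obtain ⟨u0, hu0, hb0⟩ := Finset.mem_image.mp hb
    have hbd : Γ.edist v b = d := by
      have := (hmaps u0 hu0).1
      simpa [sph, hb0] using this
    -- b has a neighbor w' at distance d-1
    obtain ⟨d', rfl⟩ : ∃ d', d = d' + 1 := ⟨d - 1, by omega⟩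
    obtain ⟨w', hw'adj, hw'⟩ := exists_adj_edist Γ (by exact_mod_cast hbd)
    have hsub : ((sph Γ v (d'+1+1)).filter fun a => f a = b) ⊆
        (Γ.neighborFinset b).erase w' := by
      intro a ha
      simp only [Finset.mem_filter] at ha
      obtain ⟨hasph, hafb⟩ := ha
      have hadj : Γ.Adj a b := hafb ▸ (hmaps a hasph).2
      refine Finset.mem_erase.mpr ⟨?_, (SimpleGraph.mem_neighborFinset _ _ _).mpr hadj.symm⟩
      intro rfl'
      subst rfl'
      have : Γ.edist v a = ((d'+1+1 : ℕ) : ℕ∞) := by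
        simpa [sph] using hasph
      rw [hw'] at this
      have := this.symm
      exact absurd (by exact_mod_cast this) (by omega)
    calc ((sph Γ v (d'+1+1)).filter fun a => f a = b).card
        ≤ ((Γ.neighborFinset b).erase w').card := Finset.card_le_card hsub
      _ = (Γ.neighborFinset b).card - 1 := Finset.card_erase_of_mem
            ((SimpleGraph.mem_neighborFinset _ _ _).mpr hw'adj)
      _ ≤ k - 1 := by have := hdeg b; rw [SimpleGraph.card_neighborFinset_eq_degree]; omega
  have := Finset.card_le_mul_card_image (f := f) (sph Γ v (d+1)) (k-1) key
  refine le_trans this (Nat.mul_le_mul_left _ (Finset.card_le_card ?_))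
  intro b hb
  obtain ⟨u0, hu0, hb0⟩ := Finset.mem_image.mp hb
  exact hb0 ▸ (hmaps u0 hu0).1

lemma card_sph_le {k : ℕ} (hk : 1 ≤ k) (Γ : SimpleGraph (Fin n)) (v : Fin n)
    (hdeg : ∀ u, Γ.degree u ≤ k) :
    ∀ d : ℕ, 1 ≤ d → (sph Γ v d).card ≤ k * (k - 1) ^ (d - 1) := by
  intro d
  induction d with
  | zero => omega
  | succ d ih =>
    intro _
    rcases Nat.eq_zero_or_pos d with rfl | hd
    · simpa using card_sph_one Γ v hdeg
    · calc (sph Γ v (d+1)).card ≤ (k-1) * (sph Γ v d).card := card_sph_succ hk Γ v hd hdeg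
        _ ≤ (k-1) * (k * (k-1)^(d-1)) := Nat.mul_le_mul_left _ (ih hd)
        _ = k * (k-1)^(d-1+1) := by ring
        _ = k * (k-1)^(d+1-1) := by
            have h9 : d - 1 + 1 = d + 1 - 1 := by omega
            rw [h9]

/-- ball of radius r -/
def ball (Γ : SimpleGraph (Fin n)) (v : Fin n) (r : ℕ) : Finset (Fin n) :=
  Finset.univ.filter fun u => Γ.edist v u ≤ (r : ℕ∞)

lemma card_ball_le {k : ℕ} (hk : 1 ≤ k) (Γ : SimpleGraph (Fin n)) (v : Fin n)
    (hdeg : ∀ u, Γ.degree u ≤ k) :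
    ∀ r : ℕ, (ball Γ v r).card ≤ 1 + k * ∑ i ∈ Finset.range r, (k-1)^i := by
  intro r
  induction r with
  | zero =>
    have : ball Γ v 0 = {v} := by
      ext u
      simp only [ball, Finset.mem_filter, Finset.mem_univ, true_and, Finset.mem_singleton,
        Nat.cast_zero, nonpos_iff_eq_zero, SimpleGraph.edist_eq_zero_iff]
      exact eq_comm
    simp [this]
  | succ r ih =>
    have hsub : ball Γ v (r+1) ⊆ ball Γ v r ∪ sph Γ v (r+1) := by
      intro u hu
      simp only [ball, sph, Finset.mem_union, Finset.mem_filter, Finset.mem_univ, true_and] at *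
      rcases lt_or_eq_of_le hu with h | h
      · left
        have : Γ.edist v u < ((r : ℕ∞) + 1) := by push_cast at h ⊢; exact h
        exact Order.le_of_lt_add_one this
      · right; exact h
    calc (ball Γ v (r+1)).card ≤ (ball Γ v r ∪ sph Γ v (r+1)).card := Finset.card_le_card hsub
      _ ≤ (ball Γ v r).card + (sph Γ v (r+1)).card := Finset.card_union_le _ _
      _ ≤ (1 + k * ∑ i ∈ Finset.range r, (k-1)^i) + k * (k-1)^(r+1-1) :=
          Nat.add_le_add ih (card_sph_le hk Γ v hdeg (r+1) (by omega))
      _ = 1 + k * ∑ i ∈ Finset.range (r+1), (k-1)^i := by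
          rw [Finset.sum_range_succ, Nat.add_sub_cancel]; ring

lemma geom_sum_le {q : ℕ} (hq : 2 ≤ q) (m : ℕ) :
    ∑ i ∈ Finset.range (m+1), q^i ≤ 2 * q^m := by
  induction m with
  | zero => simp
  | succ m ih =>
    rw [Finset.sum_range_succ]
    have h1 : 2 * q^m ≤ q^(m+1) := by
      rw [pow_succ]
      calc 2 * q^m = q^m * 2 := by ring
        _ ≤ q^m * q := by exact Nat.mul_le_mul_left _ hq
    calc (∑ i ∈ Finset.range (m+1), q^i) + q^(m+1) ≤ 2*q^m + q^(m+1) := by omega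
      _ ≤ q^(m+1) + q^(m+1) := by omega
      _ = 2 * q^(m+1) := by ring

lemma card_ball_le' {k : ℕ} (hk : 3 ≤ k) (Γ : SimpleGraph (Fin n)) (v : Fin n)
    (hdeg : ∀ u, Γ.degree u ≤ k) {r : ℕ} (hr : 1 ≤ r) :
    (ball Γ v r).card ≤ 1 + 2 * k * (k-1)^(r-1) := by
  obtain ⟨m, rfl⟩ : ∃ m, r = m + 1 := ⟨r - 1, by omega⟩
  calc (ball Γ v (m+1)).card ≤ 1 + k * ∑ i ∈ Finset.range (m+1), (k-1)^i :=
        card_ball_le (by omega) Γ v hdeg (m+1)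
    _ ≤ 1 + k * (2 * (k-1)^m) := by
        gcongr
        exact geom_sum_le (by omega) m
    _ = 1 + 2 * k * (k-1)^(m+1-1) := by rw [Nat.add_sub_cancel]; ring



lemma addEdge_adj (Γ : SimpleGraph (Fin n)) (u v a b : Fin n) :
    (addEdge Γ u v).Adj a b ↔ Γ.Adj a b ∨ (a ≠ b ∧ ((a = u ∧ b = v) ∨ (a = v ∧ b = u))) := by
  simp only [addEdge, SimpleGraph.sup_adj, SimpleGraph.fromEdgeSet_adj, Set.mem_singleton_iff,
    Sym2.eq_iff]
  tauto

lemma neighborFinset_addEdge_fst (Γ : SimpleGraph (Fin n)) {u v : Fin n} (hne : u ≠ v) :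
    (addEdge Γ u v).neighborFinset u = insert v (Γ.neighborFinset u) := by
  ext a
  simp only [SimpleGraph.mem_neighborFinset, addEdge_adj, Finset.mem_insert]
  constructor
  · rintro (h | ⟨h1, ⟨h2, h3⟩ | ⟨h2, h3⟩⟩)
    · exact Or.inr h
    · exact Or.inl h3
    · exact absurd h2 hne
  · rintro (rfl | h)
    · exact Or.inr ⟨hne, by tauto⟩
    · exact Or.inl h

lemma neighborFinset_addEdge_snd (Γ : SimpleGraph (Fin n)) {u v : Fin n} (hne : u ≠ v) :
    (addEdge Γ u v).neighborFinset v = insert u (Γ.neighborFinset v) := by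
  ext a
  simp only [SimpleGraph.mem_neighborFinset, addEdge_adj, Finset.mem_insert]
  constructor
  · rintro (h | ⟨h1, ⟨h2, h3⟩ | ⟨h2, h3⟩⟩)
    · exact Or.inr h
    · exact absurd h2 hne.symm
    · exact Or.inl h3
  · rintro (rfl | h)
    · exact Or.inr ⟨hne.symm, by tauto⟩
    · exact Or.inl h

lemma degree_addEdge (Γ : SimpleGraph (Fin n)) {u v : Fin n} (hne : u ≠ v)
    (hadj : ¬Γ.Adj u v) (w : Fin n) :
    (addEdge Γ u v).degree w = if w = u ∨ w = v then Γ.degree w + 1 else Γ.degree w := by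
  rcases eq_or_ne w u with rfl | hwu
  · rw [if_pos (Or.inl rfl), ← SimpleGraph.card_neighborFinset_eq_degree,
      ← SimpleGraph.card_neighborFinset_eq_degree, neighborFinset_addEdge_fst Γ hne,
      Finset.card_insert_of_notMem (by simpa [SimpleGraph.mem_neighborFinset] using hadj)]
  · rcases eq_or_ne w v with rfl | hwv
    · rw [if_pos (Or.inr rfl), ← SimpleGraph.card_neighborFinset_eq_degree,
        ← SimpleGraph.card_neighborFinset_eq_degree, neighborFinset_addEdge_snd Γ hne,
        Finset.card_insert_of_notMem
          (by simp only [SimpleGraph.mem_neighborFinset]; exact fun h => hadj h.symm)]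
    · have hnb : (addEdge Γ u v).neighborFinset w = Γ.neighborFinset w := by
        ext a
        simp only [SimpleGraph.mem_neighborFinset, addEdge_adj]
        constructor
        · rintro (h | ⟨h1, ⟨h2, h3⟩ | ⟨h2, h3⟩⟩)
          · exact h
          · exact absurd h2 hwu
          · exact absurd h2 hwv
        · exact Or.inl
      rw [if_neg (by tauto), ← SimpleGraph.card_neighborFinset_eq_degree,
        ← SimpleGraph.card_neighborFinset_eq_degree, hnb]

lemma unsat_eq {k : ℕ} (Γ : SimpleGraph (Fin n))
    (hdeg : ∀ v, Γ.degree v = k - 1 ∨ Γ.degree v = k)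
    (hne : (Finset.univ.filter fun v => Γ.degree v = k - 1).Nonempty) :
    unsat Γ = Finset.univ.filter fun v => Γ.degree v = k - 1 := by
  obtain ⟨v₀, hv₀⟩ := hne
  have hv₀' : Γ.degree v₀ = k - 1 := (Finset.mem_filter.mp hv₀).2
  have : Nonempty (Fin n) := ⟨v₀⟩
  have hmin : Γ.minDegree = k - 1 := by
    refine le_antisymm (hv₀' ▸ Γ.minDegree_le_degree v₀) ?_
    refine Γ.le_minDegree_of_forall_le_degree _ fun v => ?_
    rcases hdeg v with h | h <;> omega
  unfold unsat
  rw [hmin]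

lemma partner_bound {k g : ℕ} (hk : 3 ≤ k) (hg : 3 ≤ g) (Γ : SimpleGraph (Fin n))
    (hdegle : ∀ v, Γ.degree v ≤ k) {v : Fin n} (hv : v ∈ unsat Γ) :
    (unsat Γ).card ≤
      (Finset.univ.filter fun u => AvailRel g Γ v u).card + (1 + 2*k*(k-1)^(g-3)) := by
  have hsub : unsat Γ ⊆ (Finset.univ.filter fun u => AvailRel g Γ v u) ∪ ball Γ v (g-2) := by
    intro u hu
    by_cases hball : Γ.edist v u ≤ ((g - 2 : ℕ) : ℕ∞)
    · refine Finset.mem_union_right _ ?_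
      simp only [ball, Finset.mem_filter]
      exact ⟨Finset.mem_univ _, hball⟩
    · refine Finset.mem_union_left _
        (Finset.mem_filter.mpr ⟨Finset.mem_univ _, ?_, hv, hu, ?_⟩)
      · rintro rfl
        exact hball (by simp [SimpleGraph.edist_self])
      · have hlt : ((g - 2 : ℕ) : ℕ∞) < Γ.edist v u := lt_of_not_ge hball
        have h1 := Order.add_one_le_of_lt hlt
        have hcast : ((g - 1 : ℕ) : ℕ∞) = ((g - 2 : ℕ) : ℕ∞) + 1 := by
          have h2 : g - 1 = (g - 2) + 1 := by omega
          rw [h2]; push_cast; ring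
        rw [hcast]; exact h1
  calc (unsat Γ).card
      ≤ ((Finset.univ.filter fun u => AvailRel g Γ v u) ∪ ball Γ v (g-2)).card :=
        Finset.card_le_card hsub
    _ ≤ (Finset.univ.filter fun u => AvailRel g Γ v u).card + (ball Γ v (g-2)).card :=
        Finset.card_union_le _ _
    _ ≤ (Finset.univ.filter fun u => AvailRel g Γ v u).card + (1 + 2*k*(k-1)^(g-2-1)) := by
        have := card_ball_le' hk Γ v hdegle (r := g-2) (by omega)
        omega
    _ = (Finset.univ.filter fun u => AvailRel g Γ v u).card + (1 + 2*k*(k-1)^(g-3)) := by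
        have h3 : g - 2 - 1 = g - 3 := by omega
        rw [h3]

lemma card_avail_eq (g : ℕ) (Γ : SimpleGraph (Fin n)) :
    (avail g Γ).card = ∑ v : Fin n, (Finset.univ.filter fun u => AvailRel g Γ v u).card := by
  rw [avail, Finset.card_filter, Fintype.sum_prod_type]
  exact Finset.sum_congr rfl fun v _ => (Finset.card_filter _ _).symm

lemma two_mul_card_availSym (g : ℕ) (Γ : SimpleGraph (Fin n)) :
    (avail g Γ).card ≤ 2 * (availSym g Γ).card := by
  apply Finset.card_le_mul_card_image
  intro b hb
  obtain ⟨p, hp, rfl⟩ := Finset.mem_image.mp hb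
  have hsub : ((avail g Γ).filter fun a => s(a.1, a.2) = s(p.1, p.2)) ⊆
      {(p.1, p.2), (p.2, p.1)} := by
    intro a ha
    have h2 := (Finset.mem_filter.mp ha).2
    rcases Sym2.eq_iff.mp h2 with ⟨h1, h2'⟩ | ⟨h1, h2'⟩
    · simp [Prod.ext_iff, h1, h2']
    · simp [Prod.ext_iff, h1, h2']
  calc ((avail g Γ).filter fun a => s(a.1, a.2) = s(p.1, p.2)).card
      ≤ ({(p.1, p.2), (p.2, p.1)} : Finset (Fin n × Fin n)).card := Finset.card_le_card hsub
    _ ≤ 2 := by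
        refine le_trans (Finset.card_insert_le _ _) ?_
        simp

end HG

set_option maxHeartbeats 2000000 in
open HG in
/-- Early-phase properties of the high-girth process: with
`T = (n - n^(c+ε))/2`, for every run and every integer `0 ≤ t ≤ T`:
(1) `|W(G_t)| = n - 2t`; (2) each `v ∈ W(G_t)` lies in at least `|W(G_t)| - 1 - 2k·n^c`
available pairs; (3) `|𝒜(G_t)| ≥ (1/2)·|W(G_t)|·(|W(G_t)| - 1 - 2k·n^c)`;
(4) if moreover `t < T` then `𝒜(G_t) ≠ ∅` and the run does not freeze at step `t`. -/
theorem early_phase (k : ℕ) (hk : 3 ≤ k) (c ε : ℝ) (hc0 : 0 < c) (hc1 : c < 1)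
    (hε0 : 0 < ε) (hε1 : ε < 1 - c) :
    ∃ n₀ : ℕ, ∀ n : ℕ, n₀ ≤ n → Even n →
      ∀ G : SimpleGraph (Fin n), G.IsRegularOfDegree (k - 1) →
      ∀ g : ℕ, 3 ≤ g → (g : ℝ) ≤ c * Real.log n / Real.log (k - 1) →
      ∀ f : ℕ → SimpleGraph (Fin n), HG.IsRun k g G f →
      ∀ t : ℕ, (t : ℝ) ≤ ((n : ℝ) - (n : ℝ) ^ (c + ε)) / 2 →
        ((HG.unsat (f t)).card = n - 2 * t) ∧
        (∀ v ∈ HG.unsat (f t),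
          ((HG.unsat (f t)).card : ℝ) - 1 - 2 * k * (n : ℝ) ^ c ≤
            ((Finset.univ.filter fun u : Fin n => HG.AvailRel g (f t) v u).card : ℝ)) ∧
        (((HG.unsat (f t)).card : ℝ) *
            (((HG.unsat (f t)).card : ℝ) - 1 - 2 * k * (n : ℝ) ^ c) / 2 ≤
          ((HG.availSym g (f t)).card : ℝ)) ∧
        ((t : ℝ) < ((n : ℝ) - (n : ℝ) ^ (c + ε)) / 2 →
          HG.availSym g (f t) ≠ ∅ ∧ f (t + 1) ≠ f t) := by
  classical
  refine ⟨max 2 (⌈(2*(k:ℝ)+1)^(1/ε)⌉₊ + 1), ?_⟩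
  intro n hn _hEven G hG g hg hglog f hrun t ht
  set T : ℝ := ((n : ℝ) - (n : ℝ) ^ (c + ε)) / 2 with hT
  have hn2 : 2 ≤ n := le_trans (le_max_left _ _) hn
  have hnR : (2:ℝ) ≤ n := by exact_mod_cast hn2
  have hn0 : (0:ℝ) < n := by linarith
  have hn1 : (1:ℝ) ≤ n := by linarith
  have hkR : (0:ℝ) < 2*(k:ℝ)+1 := by positivity
  have hx : (2*(k:ℝ)+1)^(1/ε) ≤ n := by
    have h1 : (⌈(2*(k:ℝ)+1)^(1/ε)⌉₊ + 1 : ℕ) ≤ n := le_trans (le_max_right _ _) hn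
    calc (2*(k:ℝ)+1)^(1/ε) ≤ (⌈(2*(k:ℝ)+1)^(1/ε)⌉₊ : ℝ) := Nat.le_ceil _
      _ ≤ (n : ℝ) := by exact_mod_cast le_trans (Nat.le_succ _) h1
  have hne' : 2*(k:ℝ)+1 ≤ (n:ℝ)^ε := by
    calc 2*(k:ℝ)+1 = ((2*(k:ℝ)+1)^(1/ε))^ε := by
          rw [← Real.rpow_mul (le_of_lt hkR), one_div_mul_cancel (ne_of_gt hε0), Real.rpow_one]
      _ ≤ (n:ℝ)^ε := Real.rpow_le_rpow (Real.rpow_nonneg (le_of_lt hkR) _) hx (le_of_lt hε0)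
  have hnc1 : (1:ℝ) ≤ (n:ℝ)^c := by
    calc (1:ℝ) = (n:ℝ)^(0:ℝ) := (Real.rpow_zero _).symm
      _ ≤ (n:ℝ)^c := Real.rpow_le_rpow_of_exponent_le hn1 (le_of_lt hc0)
  have hce : (2*(k:ℝ)+1) * (n:ℝ)^c ≤ (n:ℝ)^(c+ε) := by
    rw [Real.rpow_add hn0]
    calc (2*(k:ℝ)+1) * (n:ℝ)^c = (n:ℝ)^c * (2*(k:ℝ)+1) := by ring
      _ ≤ (n:ℝ)^c * (n:ℝ)^ε :=
          mul_le_mul_of_nonneg_left hne' (Real.rpow_nonneg (le_of_lt hn0) _)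
  have hK : ((k-1:ℕ):ℝ) = (k:ℝ) - 1 := by
    rw [Nat.cast_sub (by omega : 1 ≤ k)]; norm_num
  have hk3R : (3:ℝ) ≤ (k:ℝ) := by exact_mod_cast hk
  have hpowc : (((k-1:ℕ):ℝ))^(g-3:ℕ) ≤ (n:ℝ)^c := by
    have hlogpos : 0 < Real.log ((k:ℝ)-1) := Real.log_pos (by linarith)
    have hmul : (g:ℝ) * Real.log ((k:ℝ)-1) ≤ c * Real.log n := by
      have h5 := (le_div_iff₀ hlogpos).mp hglog
      linarith
    calc ((k-1:ℕ):ℝ)^(g-3:ℕ) ≤ ((k-1:ℕ):ℝ)^(g:ℕ) := by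
          apply pow_le_pow_right₀ (by rw [hK]; linarith) (by omega)
      _ = ((k:ℝ)-1)^((g:ℕ):ℝ) := by rw [hK, Real.rpow_natCast]
      _ = Real.exp (Real.log ((k:ℝ)-1) * g) := by
          rw [Real.rpow_def_of_pos (by linarith)]
      _ ≤ Real.exp (Real.log n * c) := Real.exp_le_exp.mpr (by linarith)
      _ = (n:ℝ)^c := by rw [← Real.rpow_def_of_pos hn0]
  have hTpos : (0:ℝ) < (n:ℝ)^(c+ε) := Real.rpow_pos_of_pos hn0 _
  have hk0R : (0:ℝ) ≤ (k:ℝ) := by positivity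
  have hbnd : 1 + 2*(k:ℝ)*(((k-1:ℕ):ℝ))^(g-3:ℕ) ≤ 1 + 2*(k:ℝ)*(n:ℝ)^c := by
    have := mul_le_mul_of_nonneg_left hpowc (by linarith : (0:ℝ) ≤ 2*(k:ℝ))
    linarith
  -- `progress`: at any time strictly before T the process makes a step
  have progress : ∀ s : ℕ, (s:ℝ) < T →
      (∀ v, (f s).degree v = k-1 ∨ (f s).degree v = k) →
      ((Finset.univ.filter fun v => (f s).degree v = k-1).card = n - 2*s) →
      ∃ p : Fin n × Fin n, p ∈ avail g (f s) ∧ f (s+1) = addEdge (f s) p.1 p.2 := by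
    intro s hs hdeg hcard
    have h2sR : ((2*s : ℕ) : ℝ) < (n:ℝ) - (n:ℝ)^(c+ε) := by
      push_cast
      rw [hT] at hs
      linarith
    have h2s : 2*s < n := by
      have : ((2*s : ℕ) : ℝ) < (n:ℝ) := by linarith
      exact_mod_cast this
    have hfne : (Finset.univ.filter fun v => (f s).degree v = k-1).Nonempty := by
      rw [← Finset.card_pos, hcard]; omega
    have huns : unsat (f s) = Finset.univ.filter fun v => (f s).degree v = k-1 :=
      unsat_eq (f s) hdeg hfne
    have hdegle : ∀ v, (f s).degree v ≤ k := fun v => by rcases hdeg v with h | h <;> omega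
    obtain ⟨v₀, hv₀⟩ := hfne
    have hv₀u : v₀ ∈ unsat (f s) := by rw [huns]; exact hv₀
    have hcardu : (unsat (f s)).card = n - 2*s := by rw [huns, hcard]
    have hpb := partner_bound hk hg (f s) hdegle hv₀u
    have hmR : ((n - 2*s : ℕ) : ℝ) > 1 + 2*(k:ℝ)*(((k-1:ℕ):ℝ))^(g-3:ℕ) := by
      have hc1 : ((n - 2*s : ℕ) : ℝ) = (n:ℝ) - (2*s : ℕ) := by
        rw [Nat.cast_sub (le_of_lt h2s)]
      have hc2 : (n:ℝ) - (2*s:ℕ) > (n:ℝ)^(c+ε) := by linarith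
      have hc3 : (2*(k:ℝ)+1) * (n:ℝ)^c ≥ 1 + 2*(k:ℝ)*(n:ℝ)^c := by nlinarith
      linarith
    have hppos : 0 < (Finset.univ.filter fun u => AvailRel g (f s) v₀ u).card := by
      by_contra h0
      push_neg at h0
      have h0' : (Finset.univ.filter fun u => AvailRel g (f s) v₀ u).card = 0 := by omega
      rw [hcardu, h0'] at hpb
      have : ((n - 2*s : ℕ) : ℝ) ≤ ((0 + (1 + 2*k*(k-1)^(g-3)) : ℕ) : ℝ) := by
        exact_mod_cast hpb
      push_cast at this
      linarith
    obtain ⟨u₀, hu₀⟩ := Finset.card_pos.mp hppos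
    have hA : AvailRel g (f s) v₀ u₀ := (Finset.mem_filter.mp hu₀).2
    have havail : (v₀, u₀) ∈ avail g (f s) :=
      Finset.mem_filter.mpr ⟨Finset.mem_univ _, hA⟩
    have hnreg : ¬ (f s).IsRegularOfDegree k := by
      intro hreg
      have h6 := hreg v₀
      have h7 := (Finset.mem_filter.mp hv₀).2
      omega
    have hcond : ¬ ((f s).IsRegularOfDegree k ∨ avail g (f s) = ∅) := by
      push_neg
      exact ⟨hnreg, ⟨_, havail⟩⟩
    have hstep := hrun.2 s
    rw [if_neg hcond] at hstep
    obtain ⟨p, hp, hf1⟩ := hstep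
    exact ⟨p, hp, hf1⟩
  -- main invariant by induction
  have key : ∀ s : ℕ, (s:ℝ) ≤ T →
      (∀ v, (f s).degree v = k-1 ∨ (f s).degree v = k) ∧
      ((Finset.univ.filter fun v => (f s).degree v = k-1).card = n - 2*s) := by
    intro s
    induction s with
    | zero =>
      intro _
      have h0 : ∀ v : Fin n, (f 0).degree v = k - 1 := by rw [hrun.1]; exact hG
      refine ⟨fun v => Or.inl (h0 v), ?_⟩
      rw [Finset.filter_true_of_mem (fun x _ => h0 x)]
      simp [Finset.card_univ]
    | succ s ih =>
      intro hs1
      have hsle : (s:ℝ) ≤ T := by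
        have : (s:ℝ) ≤ (s+1:ℕ) := by push_cast; linarith
        linarith [this, hs1]
      have hslt : (s:ℝ) < T := by
        have : (s:ℝ) < (s+1:ℕ) := by push_cast; linarith
        linarith [this, hs1]
      obtain ⟨hdeg, hcard⟩ := ih hsle
      obtain ⟨p, hp, hf1⟩ := progress s hslt hdeg hcard
      have hA : AvailRel g (f s) p.1 p.2 := (Finset.mem_filter.mp hp).2
      obtain ⟨hpne, h1u, h2u, hdist⟩ := hA
      have hfne : (Finset.univ.filter fun v => (f s).degree v = k-1).Nonempty := by
        have h2sR : ((2*s : ℕ) : ℝ) < (n:ℝ) := by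
          push_cast
          rw [hT] at hslt
          linarith
        have h2s : 2*s < n := by exact_mod_cast h2sR
        rw [← Finset.card_pos, hcard]; omega
      have huns : unsat (f s) = Finset.univ.filter fun v => (f s).degree v = k-1 :=
        unsat_eq (f s) hdeg hfne
      have h1u' : p.1 ∈ Finset.univ.filter (fun v => (f s).degree v = k-1) := by
        rw [← huns]; exact h1u
      have h2u' : p.2 ∈ Finset.univ.filter (fun v => (f s).degree v = k-1) := by
        rw [← huns]; exact h2u
      have hd1 : (f s).degree p.1 = k - 1 := (Finset.mem_filter.mp h1u').2
      have hd2 : (f s).degree p.2 = k - 1 := (Finset.mem_filter.mp h2u').2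
      have hnadj : ¬ (f s).Adj p.1 p.2 := by
        intro h
        rw [SimpleGraph.edist_eq_one_iff_adj.mpr h] at hdist
        have h8 : ((g-1:ℕ) : ℕ∞) ≤ ((1:ℕ) : ℕ∞) := by exact_mod_cast hdist
        have : (g-1:ℕ) ≤ 1 := by exact_mod_cast h8
        omega
      have hdeg' : ∀ w, (f (s+1)).degree w =
          if w = p.1 ∨ w = p.2 then (f s).degree w + 1 else (f s).degree w := by
        intro w; rw [hf1]; exact degree_addEdge (f s) hpne hnadj w
      constructor
      · intro v
        rw [hdeg' v]
        split
        · rename_i h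
          rcases h with rfl | rfl
          · rw [hd1]; right; omega
          · rw [hd2]; right; omega
        · exact hdeg v
      · have hset : (Finset.univ.filter fun v => (f (s+1)).degree v = k-1) =
            (Finset.univ.filter fun v => (f s).degree v = k-1) \ {p.1, p.2} := by
          ext w
          simp only [Finset.mem_filter, Finset.mem_univ, true_and, Finset.mem_sdiff,
            Finset.mem_insert, Finset.mem_singleton]
          rw [hdeg' w]
          by_cases hw : w = p.1 ∨ w = p.2
          · rw [if_pos hw]
            constructor
            · intro h
              exfalso
              rcases hw with rfl | rfl
              · rw [hd1] at h; omega
              · rw [hd2] at h; omega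
            · rintro ⟨_, h2⟩; tauto
          · rw [if_neg hw]
            push_neg at hw
            tauto
        have hsubpair : ({p.1, p.2} : Finset (Fin n)) ⊆
            Finset.univ.filter fun v => (f s).degree v = k-1 := by
          intro x hx
          simp only [Finset.mem_insert, Finset.mem_singleton] at hx
          rcases hx with rfl | rfl
          · exact Finset.mem_filter.mpr ⟨Finset.mem_univ _, hd1⟩
          · exact Finset.mem_filter.mpr ⟨Finset.mem_univ _, hd2⟩
        rw [hset, Finset.card_sdiff_of_subset hsubpair, hcard, Finset.card_pair hpne]
        omega
  -- now derive the four claims at time t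
  obtain ⟨hdeg, hcard⟩ := key t ht
  have h2tR : ((2*t : ℕ) : ℝ) < (n:ℝ) := by
    push_cast
    rw [hT] at ht
    linarith
  have h2t : 2*t < n := by exact_mod_cast h2tR
  have hfne : (Finset.univ.filter fun v => (f t).degree v = k-1).Nonempty := by
    rw [← Finset.card_pos, hcard]; omega
  have huns : unsat (f t) = Finset.univ.filter fun v => (f t).degree v = k-1 :=
    unsat_eq (f t) hdeg hfne
  have hdegle : ∀ v, (f t).degree v ≤ k := fun v => by rcases hdeg v with h | h <;> omega
  have hcardu : (unsat (f t)).card = n - 2*t := by rw [huns, hcard]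
  have part2 : ∀ v ∈ HG.unsat (f t),
      ((HG.unsat (f t)).card : ℝ) - 1 - 2 * k * (n : ℝ) ^ c ≤
        ((Finset.univ.filter fun u : Fin n => HG.AvailRel g (f t) v u).card : ℝ) := by
    intro v hv
    have hpb := partner_bound hk hg (f t) hdegle hv
    have hpbR : ((unsat (f t)).card : ℝ) ≤
        ((Finset.univ.filter fun u => AvailRel g (f t) v u).card : ℝ) +
          (1 + 2*(k:ℝ)*(((k-1:ℕ):ℝ))^(g-3:ℕ)) := by
      have := (Nat.cast_le (α := ℝ)).mpr hpb
      push_cast at this ⊢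
      linarith
    linarith
  refine ⟨by rw [hcardu], part2, ?_, ?_⟩
  · -- claim (3)
    have hcav : (avail g (f t)).card =
        ∑ v : Fin n, (Finset.univ.filter fun u => AvailRel g (f t) v u).card :=
      card_avail_eq g (f t)
    have hsum : ((unsat (f t)).card : ℝ) *
        (((unsat (f t)).card : ℝ) - 1 - 2*(k:ℝ)*(n:ℝ)^c) ≤ ((avail g (f t)).card : ℝ) := by
      calc ((unsat (f t)).card : ℝ) * (((unsat (f t)).card : ℝ) - 1 - 2*(k:ℝ)*(n:ℝ)^c)
          = ∑ _v ∈ unsat (f t), (((unsat (f t)).card : ℝ) - 1 - 2*(k:ℝ)*(n:ℝ)^c) := by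
            rw [Finset.sum_const, nsmul_eq_mul]
        _ ≤ ∑ v ∈ unsat (f t),
              ((Finset.univ.filter fun u => AvailRel g (f t) v u).card : ℝ) :=
            Finset.sum_le_sum (fun v hv => part2 v hv)
        _ ≤ ∑ v : Fin n,
              ((Finset.univ.filter fun u => AvailRel g (f t) v u).card : ℝ) :=
            Finset.sum_le_sum_of_subset_of_nonneg (Finset.subset_univ _)
              (fun i _ _ => Nat.cast_nonneg _)
        _ = ((avail g (f t)).card : ℝ) := by rw [hcav]; push_cast; ring
    have h2m : ((avail g (f t)).card : ℝ) ≤ 2 * ((availSym g (f t)).card : ℝ) := by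
      exact_mod_cast two_mul_card_availSym g (f t)
    linarith
  · -- claim (4)
    intro htlt
    obtain ⟨p, hp, hf1⟩ := progress t htlt hdeg hcard
    constructor
    · exact Finset.ne_empty_of_mem (Finset.mem_image_of_mem _ hp)
    · have hA : AvailRel g (f t) p.1 p.2 := (Finset.mem_filter.mp hp).2
      obtain ⟨hpne, h1u, h2u, hdist⟩ := hA
      have hnadj : ¬ (f t).Adj p.1 p.2 := by
        intro h
        rw [SimpleGraph.edist_eq_one_iff_adj.mpr h] at hdist
        have h8 : ((g-1:ℕ) : ℕ∞) ≤ ((1:ℕ) : ℕ∞) := by exact_mod_cast hdist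
        have : (g-1:ℕ) ≤ 1 := by exact_mod_cast h8
        omega
      have hadj' : (f (t+1)).Adj p.1 p.2 := by
        rw [hf1, addEdge_adj]
        exact Or.inr ⟨hpne, Or.inl ⟨rfl, rfl⟩⟩
      intro heq
      rw [heq] at hadj'
      exact hnadj hadj'
end
end

section
/- Let k ≥ 3 and g ≥ 3 be integers, let n be even, and let G be a graph on n vertices with maximum degree at most k. Suppose G_0 = G, G_1, G_2, … is a run of the (G,g,k)-high-girth process and that for some t the graph G_t is safe, i.e., every vertex of G_t has degree k−1 or k and every two vertices of degree k−1 are at graph distance at least g−1 in G_t. Then the run saturates: there exists s ≥ t such that G_s is k-regular. -/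
open scoped Classical

noncomputable section

/-- A graph (all of whose degrees are `k-1` or `k`) is safe if every two of its
vertices of degree `k-1` are at graph distance at least `g-1`. -/
def HG.Safe (k g : ℕ) {n : ℕ} (Γ : SimpleGraph (Fin n)) : Prop :=
  (∀ v : Fin n, Γ.degree v = k - 1 ∨ Γ.degree v = k) ∧
  ∀ u v : Fin n, u ≠ v → Γ.degree u = k - 1 → Γ.degree v = k - 1 →
    ((g - 1 : ℕ) : ℕ∞) ≤ Γ.edist u v


section Aux

open HG SimpleGraph Finset

variable {n : ℕ}

lemma HGaux.addEdge_adj (Γ : SimpleGraph (Fin n)) (u v a b : Fin n) :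
    (addEdge Γ u v).Adj a b ↔ Γ.Adj a b ∨ (s(a, b) = s(u, v) ∧ a ≠ b) := by
  simp [addEdge, SimpleGraph.fromEdgeSet_adj]

lemma HGaux.addEdge_comm (Γ : SimpleGraph (Fin n)) (u v : Fin n) :
    addEdge Γ u v = addEdge Γ v u := by
  unfold addEdge
  rw [Sym2.eq_swap]

lemma HGaux.le_edist_of_forall (Γ : SimpleGraph (Fin n)) (x y : Fin n) (c : ℕ∞)
    (h : ∀ p : Γ.Walk x y, c ≤ p.length) : c ≤ Γ.edist x y := by
  rw [SimpleGraph.edist_eq_sInf]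
  refine le_sInf ?_
  rintro _ ⟨p, rfl⟩
  exact h p

lemma HGaux.walk_cases (Γ : SimpleGraph (Fin n)) (u v x y : Fin n)
    (p : (addEdge Γ u v).Walk x y) :
    Γ.edist x y ≤ p.length ∨
    Γ.edist x u + 1 + Γ.edist v y ≤ p.length ∨
    Γ.edist x v + 1 + Γ.edist u y ≤ p.length := by
  induction p with
  | nil => left; simp
  | @cons a w c h q ih =>
    rw [SimpleGraph.Walk.length_cons]
    push_cast
    rcases (HGaux.addEdge_adj Γ u v a w).mp h with hadj | ⟨hsym, _⟩
    · have h1 : Γ.edist a w ≤ 1 := by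
        rw [(SimpleGraph.edist_eq_one_iff_adj).mpr hadj]
      rcases ih with h2 | h2 | h2
      · left
        calc Γ.edist a c ≤ Γ.edist a w + Γ.edist w c := SimpleGraph.edist_triangle
        _ ≤ 1 + q.length := add_le_add h1 h2
        _ = (q.length : ℕ∞) + 1 := by rw [add_comm]
      · right; left
        have h3 : Γ.edist a u ≤ 1 + Γ.edist w u :=
          le_trans SimpleGraph.edist_triangle (add_le_add_left h1 _)
        calc Γ.edist a u + 1 + Γ.edist v c
            ≤ (1 + Γ.edist w u) + 1 + Γ.edist v c := by
              exact add_le_add (add_le_add_left h3 _) le_rfl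
          _ = 1 + (Γ.edist w u + 1 + Γ.edist v c) := by ring
          _ ≤ 1 + (q.length : ℕ∞) := add_le_add_right h2 _
          _ = (q.length : ℕ∞) + 1 := by rw [add_comm]
      · right; right
        have h3 : Γ.edist a v ≤ 1 + Γ.edist w v :=
          le_trans SimpleGraph.edist_triangle (add_le_add_left h1 _)
        calc Γ.edist a v + 1 + Γ.edist u c
            ≤ (1 + Γ.edist w v) + 1 + Γ.edist u c := by
              exact add_le_add (add_le_add_left h3 _) le_rfl
          _ = 1 + (Γ.edist w v + 1 + Γ.edist u c) := by ring
          _ ≤ 1 + (q.length : ℕ∞) := add_le_add_right h2 _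
          _ = (q.length : ℕ∞) + 1 := by rw [add_comm]
    · rcases Sym2.eq_iff.mp hsym with ⟨rfl, rfl⟩ | ⟨rfl, rfl⟩
      · -- a = u, w = v
        rcases ih with h2 | h2 | h2
        · right; left
          rw [SimpleGraph.edist_self, zero_add]
          calc (1 : ℕ∞) + Γ.edist w c ≤ 1 + q.length := add_le_add_right h2 _
            _ = (q.length : ℕ∞) + 1 := by rw [add_comm]
        · right; left
          rw [SimpleGraph.edist_self, zero_add]
          have h3 : Γ.edist w c ≤ q.length :=
            le_trans (le_add_self : Γ.edist w c ≤ Γ.edist w a + 1 + Γ.edist w c) h2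
          calc (1 : ℕ∞) + Γ.edist w c ≤ 1 + q.length := add_le_add_right h3 _
            _ = (q.length : ℕ∞) + 1 := by rw [add_comm]
        · left
          rw [SimpleGraph.edist_self, zero_add] at h2
          calc Γ.edist a c ≤ 1 + Γ.edist a c := le_add_self
            _ ≤ (q.length : ℕ∞) := h2
            _ ≤ (q.length : ℕ∞) + 1 := le_self_add
      · -- a = v, w = u
        rcases ih with h2 | h2 | h2
        · right; right
          rw [SimpleGraph.edist_self, zero_add]
          calc (1 : ℕ∞) + Γ.edist w c ≤ 1 + q.length := add_le_add_right h2 _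
            _ = (q.length : ℕ∞) + 1 := by rw [add_comm]
        · left
          rw [SimpleGraph.edist_self, zero_add] at h2
          calc Γ.edist a c ≤ 1 + Γ.edist a c := le_add_self
            _ ≤ (q.length : ℕ∞) := h2
            _ ≤ (q.length : ℕ∞) + 1 := le_self_add
        · right; right
          rw [SimpleGraph.edist_self, zero_add]
          have h3 : Γ.edist w c ≤ q.length :=
            le_trans (le_add_self : Γ.edist w c ≤ Γ.edist w a + 1 + Γ.edist w c) h2
          calc (1 : ℕ∞) + Γ.edist w c ≤ 1 + q.length := add_le_add_right h3 _
            _ = (q.length : ℕ∞) + 1 := by rw [add_comm]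

lemma HGaux.addEdge_neighborFinset_left (Γ : SimpleGraph (Fin n)) {u v : Fin n}
    (huv : u ≠ v) :
    (addEdge Γ u v).neighborFinset u = insert v (Γ.neighborFinset u) := by
  ext w
  simp only [SimpleGraph.mem_neighborFinset, Finset.mem_insert, HGaux.addEdge_adj,
    Sym2.eq_iff]
  constructor
  · rintro (h | ⟨(⟨-, rfl⟩ | ⟨rfl, rfl⟩), hne⟩)
    · exact Or.inr h
    · exact Or.inl rfl
    · exact absurd rfl hne
  · rintro (rfl | h)
    · exact Or.inr ⟨Or.inl ⟨trivial, rfl⟩, huv⟩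
    · exact Or.inl h

lemma HGaux.addEdge_degree_left (Γ : SimpleGraph (Fin n)) {u v : Fin n}
    (huv : u ≠ v) (hna : ¬ Γ.Adj u v) :
    (addEdge Γ u v).degree u = Γ.degree u + 1 := by
  rw [← SimpleGraph.card_neighborFinset_eq_degree, ← SimpleGraph.card_neighborFinset_eq_degree,
    HGaux.addEdge_neighborFinset_left Γ huv,
    Finset.card_insert_of_notMem (by simpa [SimpleGraph.mem_neighborFinset] using hna)]

lemma HGaux.addEdge_degree_right (Γ : SimpleGraph (Fin n)) {u v : Fin n}
    (huv : u ≠ v) (hna : ¬ Γ.Adj u v) :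
    (addEdge Γ u v).degree v = Γ.degree v + 1 := by
  rw [HGaux.addEdge_comm]
  exact HGaux.addEdge_degree_left Γ huv.symm fun h => hna h.symm

lemma HGaux.addEdge_degree_other (Γ : SimpleGraph (Fin n)) {u v w : Fin n}
    (hwu : w ≠ u) (hwv : w ≠ v) :
    (addEdge Γ u v).degree w = Γ.degree w := by
  rw [← SimpleGraph.card_neighborFinset_eq_degree, ← SimpleGraph.card_neighborFinset_eq_degree]
  congr 1
  ext x
  simp only [SimpleGraph.mem_neighborFinset, HGaux.addEdge_adj, Sym2.eq_iff]
  constructor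
  · rintro (h | ⟨(⟨rfl, rfl⟩ | ⟨rfl, rfl⟩), hne⟩)
    · exact h
    · exact absurd rfl hwu
    · exact absurd rfl hwv
  · exact Or.inl

lemma HGaux.even_card (k : ℕ) (hk : 1 ≤ k) (hn : Even n) (Γ : SimpleGraph (Fin n))
    (h : ∀ v : Fin n, Γ.degree v = k - 1 ∨ Γ.degree v = k) :
    Even (Finset.univ.filter fun v => Γ.degree v = k - 1).card := by
  classical
  set S := Finset.univ.filter fun v : Fin n => Γ.degree v = k - 1 with hS
  have hsplit : ∑ v ∈ S, Γ.degree v + ∑ v ∈ Finset.univ.filter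
      (fun v : Fin n => ¬ Γ.degree v = k - 1), Γ.degree v = ∑ v : Fin n, Γ.degree v :=
    Finset.sum_filter_add_sum_filter_not _ _ _
  have h1 : ∑ v ∈ S, Γ.degree v = (k - 1) * S.card := by
    rw [Finset.sum_congr rfl (fun v hv => (Finset.mem_filter.mp hv).2),
      Finset.sum_const, smul_eq_mul, mul_comm]
  have h2 : ∑ v ∈ Finset.univ.filter (fun v : Fin n => ¬ Γ.degree v = k - 1), Γ.degree v
      = k * (n - S.card) := by
    rw [Finset.sum_congr rfl (fun v hv => ?_), Finset.sum_const, smul_eq_mul, mul_comm]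
    · congr 1
      rw [hS, Finset.filter_not, Finset.card_sdiff_of_subset (Finset.filter_subset _ _),
        Finset.card_univ, Fintype.card_fin]
    · rcases h v with hv' | hv'
      · exact absurd hv' (Finset.mem_filter.mp hv).2
      · exact hv'
  have hcard : S.card ≤ n := by
    simpa using Finset.card_le_card (Finset.filter_subset _ (Finset.univ : Finset (Fin n)))
  have hkn : ∑ v : Fin n, Γ.degree v + S.card = k * n := by
    rw [← hsplit, h1, h2]
    have : k - 1 + 1 = k := Nat.succ_pred_eq_of_pos hk
    nlinarith [Nat.sub_add_cancel hcard, Nat.sub_add_cancel hk]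
  have heven1 : Even (∑ v : Fin n, Γ.degree v) :=
    ⟨Γ.edgeFinset.card, by rw [SimpleGraph.sum_degrees_eq_twice_card_edges]; ring⟩
  have heven2 : Even (k * n) := hn.mul_left k
  rw [← hkn] at heven2
  exact (Nat.even_add.mp heven2).mp heven1

end Aux

/-- If at some time `t` the state `G_t` of a run of the
`(G,g,k)`-high-girth process is safe, then the run saturates: some later state is
`k`-regular. -/
theorem safe_implies_saturation (k g : ℕ) (hk : 3 ≤ k) (hg : 3 ≤ g)
    (n : ℕ) (hn : Even n) (G : SimpleGraph (Fin n)) (hdeg : ∀ v : Fin n, G.degree v ≤ k)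
    (f : ℕ → SimpleGraph (Fin n)) (hf : HG.IsRun k g G f)
    (t : ℕ) (hsafe : HG.Safe k g (f t)) :
    ∃ s : ℕ, t ≤ s ∧ (f s).IsRegularOfDegree k := by
  classical
  obtain ⟨-, hstep⟩ := hf
  suffices H : ∀ m t, (Finset.univ.filter fun v => (f t).degree v = k - 1).card ≤ m →
      HG.Safe k g (f t) → ∃ s : ℕ, t ≤ s ∧ (f s).IsRegularOfDegree k from
    H _ t le_rfl hsafe
  intro m
  induction m with
  | zero =>
    intro t hcard hs
    refine ⟨t, le_rfl, fun v => ?_⟩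
    rcases hs.1 v with h | h
    · exfalso
      have hv : v ∈ Finset.univ.filter fun v => (f t).degree v = k - 1 := by simp [h]
      have := Finset.card_pos.mpr ⟨v, hv⟩
      omega
    · exact h
  | succ m ih =>
    intro t hcard hs
    by_cases hreg : (f t).IsRegularOfDegree k
    · exact ⟨t, le_rfl, hreg⟩
    set S := Finset.univ.filter fun v => (f t).degree v = k - 1 with hSdef
    have hex : ∃ w, (f t).degree w = k - 1 := by
      by_contra hno
      push_neg at hno
      exact hreg fun v => (hs.1 v).resolve_left (hno v)
    obtain ⟨w, hw⟩ := hex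
    have hne : Nonempty (Fin n) := ⟨w⟩
    have hmin : (f t).minDegree = k - 1 := by
      have h1 : (f t).minDegree ≤ k - 1 := hw ▸ SimpleGraph.minDegree_le_degree _ w
      have h2 : k - 1 ≤ (f t).minDegree :=
        SimpleGraph.le_minDegree_of_forall_le_degree _ _ fun v => by
          rcases hs.1 v with h | h <;> omega
      omega
    have heven : Even S.card := HGaux.even_card k (by omega) hn (f t) hs.1
    have hwS : w ∈ S := by simp [hSdef, hw]
    have h2card : 2 ≤ S.card := by
      have h1 : 1 ≤ S.card := Finset.card_pos.mpr ⟨w, hwS⟩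
      rcases heven with ⟨c, hc⟩
      omega
    obtain ⟨a, ha, b, hb, hab⟩ := Finset.one_lt_card.mp h2card
    have hda : (f t).degree a = k - 1 := (Finset.mem_filter.mp ha).2
    have hdb : (f t).degree b = k - 1 := (Finset.mem_filter.mp hb).2
    have hmem : (a, b) ∈ HG.avail g (f t) := by
      simp only [HG.avail, Finset.mem_filter, Finset.mem_univ, true_and]
      refine ⟨hab, ?_, ?_, hs.2 a b hab hda hdb⟩
      · simp [HG.unsat, hmin, hda]
      · simp [HG.unsat, hmin, hdb]
    have havail : HG.avail g (f t) ≠ ∅ := Finset.ne_empty_of_mem hmem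
    have hthis := hstep t
    rw [if_neg (not_or.mpr ⟨hreg, havail⟩)] at hthis
    obtain ⟨p, hp, hstepEq⟩ := hthis
    obtain ⟨hpne, hp1, hp2, hpd⟩ : HG.AvailRel g (f t) p.1 p.2 :=
      (Finset.mem_filter.mp hp).2
    have hd1 : (f t).degree p.1 = k - 1 := by
      simpa [HG.unsat, hmin] using hp1
    have hd2 : (f t).degree p.2 = k - 1 := by
      simpa [HG.unsat, hmin] using hp2
    have hgle : (2 : ℕ∞) ≤ ((g - 1 : ℕ) : ℕ∞) := by
      exact_mod_cast (by omega : (2 : ℕ) ≤ g - 1)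
    have hnadj : ¬ (f t).Adj p.1 p.2 := by
      intro h
      have h21 : (2 : ℕ∞) ≤ 1 := by
        rw [← SimpleGraph.edist_eq_one_iff_adj.mpr h]
        exact le_trans hgle hpd
      norm_num at h21
    have hdeg1 : (f (t + 1)).degree p.1 = k := by
      rw [hstepEq, HGaux.addEdge_degree_left _ hpne hnadj, hd1]
      omega
    have hdeg2 : (f (t + 1)).degree p.2 = k := by
      rw [hstepEq, HGaux.addEdge_degree_right _ hpne hnadj, hd2]
      omega
    have hdegother : ∀ v : Fin n, v ≠ p.1 → v ≠ p.2 →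
        (f (t + 1)).degree v = (f t).degree v := fun v h1 h2 => by
      rw [hstepEq, HGaux.addEdge_degree_other _ h1 h2]
    have hne1 : ∀ v : Fin n, (f (t + 1)).degree v = k - 1 → v ≠ p.1 ∧ v ≠ p.2 := by
      intro v hv
      constructor <;> rintro rfl <;> omega
    have hsafe' : HG.Safe k g (f (t + 1)) := by
      constructor
      · intro v
        by_cases h1 : v = p.1
        · subst h1; exact Or.inr hdeg1
        by_cases h2 : v = p.2
        · subst h2; exact Or.inr hdeg2
        · rw [hdegother v h1 h2]
          exact hs.1 v
      · intro x y hxy hdx hdy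
        obtain ⟨hx1, hx2⟩ := hne1 x hdx
        obtain ⟨hy1, hy2⟩ := hne1 y hdy
        rw [hdegother x hx1 hx2] at hdx
        rw [hdegother y hy1 hy2] at hdy
        rw [hstepEq]
        refine HGaux.le_edist_of_forall _ _ _ _ fun q => ?_
        rcases HGaux.walk_cases (f t) p.1 p.2 x y q with h | h | h
        · exact le_trans (hs.2 x y hxy hdx hdy) h
        · refine le_trans (le_trans (hs.2 x p.1 hx1 hdx hd1) ?_) h
          calc (f t).edist x p.1 ≤ (f t).edist x p.1 + 1 := le_self_add
            _ ≤ (f t).edist x p.1 + 1 + (f t).edist p.2 y := le_self_add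
        · refine le_trans (le_trans (hs.2 x p.2 hx2 hdx hd2) ?_) h
          calc (f t).edist x p.2 ≤ (f t).edist x p.2 + 1 := le_self_add
            _ ≤ (f t).edist x p.2 + 1 + (f t).edist p.1 y := le_self_add
    have hS' : (Finset.univ.filter fun v => (f (t + 1)).degree v = k - 1)
        = (S.erase p.1).erase p.2 := by
      ext v
      by_cases h1 : v = p.1
      · subst h1
        simp only [Finset.mem_filter, Finset.mem_univ, true_and, Finset.mem_erase]
        constructor
        · intro hv; omega
        · rintro ⟨-, h, -⟩; exact absurd rfl h
      by_cases h2 : v = p.2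
      · subst h2
        simp only [Finset.mem_filter, Finset.mem_univ, true_and, Finset.mem_erase]
        constructor
        · intro hv; omega
        · rintro ⟨h, -⟩; exact absurd rfl h
      · simp [Finset.mem_erase, h1, h2, hdegother v h1 h2, hSdef]
    have hp1S : p.1 ∈ S := by simp [hSdef, hd1]
    have hp2S : p.2 ∈ S.erase p.1 :=
      Finset.mem_erase.mpr ⟨hpne.symm, by simp [hSdef, hd2]⟩
    have hcard' : (Finset.univ.filter fun v => (f (t + 1)).degree v = k - 1).card ≤ m := by
      rw [hS', Finset.card_erase_of_mem hp2S, Finset.card_erase_of_mem hp1S]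
      omega
    obtain ⟨s, hs1, hs2⟩ := ih (t + 1) hcard' hsafe'
    exact ⟨s, le_trans (Nat.le_succ t) hs1, hs2⟩
end
end

section
/- Let k ≥ 3 and g ≥ 3 be integers. Let Γ be a graph in which every vertex has degree k−1 or k and which is safe, i.e., every two vertices of degree k−1 are at graph distance at least g−1 in Γ. Let u ≠ v be two vertices of degree k−1 in Γ, and let Γ' be the graph obtained from Γ by adding the edge uv. Then every vertex of Γ' has degree k−1 or k, Γ' is safe, and if the girth of Γ is at least g then the girth of Γ' is also at least g. -/
open scoped Classical

/-- A graph (all of whose degrees are `k-1` or `k`) is safe if every two of its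
vertices of degree `k-1` are at graph distance at least `g-1`. -/
def SafeGraph {V : Type*} [Fintype V] (k g : ℕ) (Γ : SimpleGraph V) : Prop :=
  ∀ u v : V, u ≠ v → Γ.degree u = k - 1 → Γ.degree v = k - 1 →
    ((g - 1 : ℕ) : ℕ∞) ≤ Γ.edist u v

private lemma degree_congr {V : Type*} {G : SimpleGraph V} {w : V}
    (i1 i2 : Fintype (G.neighborSet w)) :
    @SimpleGraph.degree V G w i1 = @SimpleGraph.degree V G w i2 := by
  congr!

private lemma edist_le_one_of_adj {V : Type*} {Γ : SimpleGraph V} {a c : V}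
    (h : Γ.Adj a c) : Γ.edist a c ≤ 1 :=
  le_of_eq (SimpleGraph.edist_eq_one_iff_adj.2 h)

/-- Key walk lemma: any walk in `Γ ⊔ {uv}` from `a` to `b` is at least as long as
the `Γ`-distance from `a` to `b`, or it passes through the new edge `uv`. -/
private lemma walk_bound {V : Type*} {Γ : SimpleGraph V} {u v : V} {a b : V}
    (w : (Γ ⊔ SimpleGraph.fromEdgeSet {s(u, v)}).Walk a b) :
    Γ.edist a b ≤ w.length ∨ Γ.edist a u + Γ.edist v b + 1 ≤ w.length ∨
      Γ.edist a v + Γ.edist u b + 1 ≤ w.length := by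
  induction w with
  | nil => left; simp [SimpleGraph.edist_self]
  | @cons a c b h p ih =>
    have hlen : ((SimpleGraph.Walk.cons h p).length : ℕ∞) = (p.length : ℕ∞) + 1 := by
      simp [SimpleGraph.Walk.length_cons]
    rw [hlen]
    rcases h with hΓ | ⟨hs, hne⟩
    · -- the first step is a `Γ`-edge
      have h1 : Γ.edist a c ≤ 1 := edist_le_one_of_adj hΓ
      rcases ih with h2 | h2 | h2
      · left
        calc Γ.edist a b ≤ Γ.edist a c + Γ.edist c b := Γ.edist_triangle
          _ ≤ 1 + (p.length : ℕ∞) := add_le_add h1 h2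
          _ = (p.length : ℕ∞) + 1 := by rw [add_comm]
      · right; left
        calc Γ.edist a u + Γ.edist v b + 1
            ≤ (Γ.edist a c + Γ.edist c u) + Γ.edist v b + 1 :=
              add_le_add (add_le_add Γ.edist_triangle le_rfl) le_rfl
          _ ≤ (1 + Γ.edist c u) + Γ.edist v b + 1 :=
              add_le_add (add_le_add (add_le_add h1 le_rfl) le_rfl) le_rfl
          _ = (Γ.edist c u + Γ.edist v b + 1) + 1 := by ring
          _ ≤ (p.length : ℕ∞) + 1 := add_le_add h2 le_rfl
      · right; right
        calc Γ.edist a v + Γ.edist u b + 1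
            ≤ (Γ.edist a c + Γ.edist c v) + Γ.edist u b + 1 :=
              add_le_add (add_le_add Γ.edist_triangle le_rfl) le_rfl
          _ ≤ (1 + Γ.edist c v) + Γ.edist u b + 1 :=
              add_le_add (add_le_add (add_le_add h1 le_rfl) le_rfl) le_rfl
          _ = (Γ.edist c v + Γ.edist u b + 1) + 1 := by ring
          _ ≤ (p.length : ℕ∞) + 1 := add_le_add h2 le_rfl
    · -- the first step is the new edge `uv`
      have hs' := Sym2.eq_iff.mp (Set.mem_singleton_iff.mp hs)
      rcases hs' with ⟨rfl, rfl⟩ | ⟨rfl, rfl⟩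
      · -- a = u, c = v
        rcases ih with h2 | h2 | h2
        · right; left
          rw [SimpleGraph.edist_self, zero_add]
          exact add_le_add h2 le_rfl
        · right; left
          rw [SimpleGraph.edist_self, zero_add]
          calc Γ.edist c b + 1 ≤ Γ.edist c a + (Γ.edist c b + 1) := le_add_self
            _ = Γ.edist c a + Γ.edist c b + 1 := by rw [add_assoc]
            _ ≤ (p.length : ℕ∞) := h2
            _ ≤ (p.length : ℕ∞) + 1 := le_self_add
        · left
          have h3 : Γ.edist a b + 1 ≤ (p.length : ℕ∞) := by
            rwa [SimpleGraph.edist_self, zero_add] at h2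
          calc Γ.edist a b ≤ Γ.edist a b + 1 := le_self_add
            _ ≤ (p.length : ℕ∞) := h3
            _ ≤ (p.length : ℕ∞) + 1 := le_self_add
      · -- a = v, c = u
        rcases ih with h2 | h2 | h2
        · right; right
          rw [SimpleGraph.edist_self, zero_add]
          exact add_le_add h2 le_rfl
        · left
          have h3 : Γ.edist a b + 1 ≤ (p.length : ℕ∞) := by
            rwa [SimpleGraph.edist_self, zero_add] at h2
          calc Γ.edist a b ≤ Γ.edist a b + 1 := le_self_add
            _ ≤ (p.length : ℕ∞) := h3
            _ ≤ (p.length : ℕ∞) + 1 := le_self_add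
        · right; right
          rw [SimpleGraph.edist_self, zero_add]
          calc Γ.edist c b + 1 ≤ Γ.edist c a + (Γ.edist c b + 1) := le_add_self
            _ = Γ.edist c a + Γ.edist c b + 1 := by rw [add_assoc]
            _ ≤ (p.length : ℕ∞) := h2
            _ ≤ (p.length : ℕ∞) + 1 := le_self_add

/-- Let `k ≥ 3`, `g ≥ 3`, and let `Γ` be a safe graph all of whose
degrees are `k-1` or `k`. If `u ≠ v` both have degree `k-1` and `Γ'` is `Γ` plus the
edge `uv`, then all degrees of `Γ'` are `k-1` or `k`, `Γ'` is safe, and if `Γ` has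
girth at least `g` then so does `Γ'`. -/
theorem safe_add_edge {V : Type*} [Fintype V] (k g : ℕ) (hk : 3 ≤ k) (hg : 3 ≤ g)
    (Γ : SimpleGraph V) (hdeg : ∀ v : V, Γ.degree v = k - 1 ∨ Γ.degree v = k)
    (hsafe : SafeGraph k g Γ) (u v : V) (huv : u ≠ v)
    (hu : Γ.degree u = k - 1) (hv : Γ.degree v = k - 1) :
    (∀ w : V, (Γ ⊔ SimpleGraph.fromEdgeSet {s(u, v)}).degree w = k - 1 ∨
        (Γ ⊔ SimpleGraph.fromEdgeSet {s(u, v)}).degree w = k) ∧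
    SafeGraph k g (Γ ⊔ SimpleGraph.fromEdgeSet {s(u, v)}) ∧
    ((g : ℕ∞) ≤ Γ.egirth → (g : ℕ∞) ≤ (Γ ⊔ SimpleGraph.fromEdgeSet {s(u, v)}).egirth) := by
  set G' := Γ ⊔ SimpleGraph.fromEdgeSet {s(u, v)} with hG'
  -- u and v are not adjacent in Γ
  have hnadj : ¬ Γ.Adj u v := by
    intro h
    have h1 : Γ.edist u v = 1 := SimpleGraph.edist_eq_one_iff_adj.2 h
    have h2 := hsafe u v huv hu hv
    rw [h1] at h2
    have h3 : (g - 1 : ℕ) ≤ 1 := by exact_mod_cast h2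
    omega
  have hadj' : ∀ a c : V, G'.Adj a c ↔ Γ.Adj a c ∨ (a = u ∧ c = v) ∨ (a = v ∧ c = u) := by
    intro a c
    rw [hG', SimpleGraph.sup_adj, SimpleGraph.fromEdgeSet_adj]
    simp only [Set.mem_singleton_iff, Sym2.eq_iff]
    constructor
    · rintro (h | ⟨(⟨rfl, rfl⟩ | ⟨rfl, rfl⟩), hne⟩)
      · exact Or.inl h
      · exact Or.inr (Or.inl ⟨rfl, rfl⟩)
      · exact Or.inr (Or.inr ⟨rfl, rfl⟩)
    · rintro (h | ⟨rfl, rfl⟩ | ⟨rfl, rfl⟩)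
      · exact Or.inl h
      · exact Or.inr ⟨Or.inl ⟨rfl, rfl⟩, huv⟩
      · exact Or.inr ⟨Or.inr ⟨rfl, rfl⟩, huv.symm⟩
  -- degree computations
  have hdegu : G'.degree u = k := by
    have hns : G'.neighborFinset u = insert v (Γ.neighborFinset u) := by
      ext z
      rw [SimpleGraph.mem_neighborFinset, Finset.mem_insert,
        SimpleGraph.mem_neighborFinset, hadj']
      constructor
      · rintro (h | ⟨-, rfl⟩ | ⟨h, rfl⟩)
        · exact Or.inr h
        · exact Or.inl rfl
        · exact absurd h huv
      · rintro (rfl | h)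
        · exact Or.inr (Or.inl ⟨rfl, rfl⟩)
        · exact Or.inl h
    have hvnm : v ∉ Γ.neighborFinset u := by
      simp [SimpleGraph.mem_neighborFinset, hnadj]
    rw [SimpleGraph.degree, hns, Finset.card_insert_of_notMem hvnm,
      ← SimpleGraph.degree, hu]
    omega
  have hdegv : G'.degree v = k := by
    have hns : G'.neighborFinset v = insert u (Γ.neighborFinset v) := by
      ext z
      rw [SimpleGraph.mem_neighborFinset, Finset.mem_insert,
        SimpleGraph.mem_neighborFinset, hadj']
      constructor
      · rintro (h | ⟨h, rfl⟩ | ⟨-, rfl⟩)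
        · exact Or.inr h
        · exact absurd h.symm huv
        · exact Or.inl rfl
      · rintro (rfl | h)
        · exact Or.inr (Or.inr ⟨rfl, rfl⟩)
        · exact Or.inl h
    have hunm : u ∉ Γ.neighborFinset v := by
      simp [SimpleGraph.mem_neighborFinset]
      intro h
      exact hnadj h.symm
    rw [SimpleGraph.degree, hns, Finset.card_insert_of_notMem hunm,
      ← SimpleGraph.degree, hv]
    omega
  have hdegw : ∀ w : V, w ≠ u → w ≠ v → G'.degree w = Γ.degree w := by
    intro w hwu hwv
    have hns : G'.neighborFinset w = Γ.neighborFinset w := by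
      ext z
      rw [SimpleGraph.mem_neighborFinset, SimpleGraph.mem_neighborFinset, hadj']
      constructor
      · rintro (h | ⟨rfl, rfl⟩ | ⟨rfl, rfl⟩)
        · exact h
        · exact absurd rfl hwu
        · exact absurd rfl hwv
      · exact fun h => Or.inl h
    rw [SimpleGraph.degree, hns, ← SimpleGraph.degree]
  -- edges of a walk avoiding s(u,v) lie in Γ
  have hedge : ∀ {a b : V} (p : G'.Walk a b), s(u, v) ∉ p.edges →
      ∀ e ∈ p.edges, e ∈ Γ.edgeSet := by
    intro a b p hp e he
    have h1 : e ∈ G'.edgeSet := p.edges_subset_edgeSet he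
    rw [hG', SimpleGraph.edgeSet_sup, SimpleGraph.edgeSet_fromEdgeSet] at h1
    rcases h1 with h1 | ⟨h1, _⟩
    · exact h1
    · rw [Set.mem_singleton_iff] at h1
      exact absurd (h1 ▸ he) hp
  refine ⟨?_, ?_, ?_⟩
  · -- degrees
    intro w
    by_cases hwu : w = u
    · subst hwu; exact Or.inr hdegu
    by_cases hwv : w = v
    · subst hwv; exact Or.inr hdegv
    rw [hdegw w hwu hwv]
    exact hdeg w
  · -- safety
    intro x y hxy hx hy
    rw [← hG'] at hx hy
    have hx0 : G'.degree x = k - 1 := Eq.trans (degree_congr _ _) hx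
    have hy0 : G'.degree y = k - 1 := Eq.trans (degree_congr _ _) hy
    have hxu : x ≠ u := by rintro rfl; rw [hdegu] at hx0; omega
    have hxv : x ≠ v := by rintro rfl; rw [hdegv] at hx0; omega
    have hyu : y ≠ u := by rintro rfl; rw [hdegu] at hy0; omega
    have hyv : y ≠ v := by rintro rfl; rw [hdegv] at hy0; omega
    have hx' : Γ.degree x = k - 1 := by rw [← hdegw x hxu hxv]; exact hx0
    have hy' : Γ.degree y = k - 1 := by rw [← hdegw y hyu hyv]; exact hy0
    rw [SimpleGraph.edist_eq_sInf]
    refine le_sInf ?_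
    rintro m ⟨w, rfl⟩
    rcases walk_bound (Γ := Γ) (u := u) (v := v) w with h | h | h
    · exact le_trans (hsafe x y hxy hx' hy') h
    · exact le_trans (le_add_right (le_add_right (hsafe x u hxu hx' hu))) h
    · exact le_trans (le_add_right (le_add_right (hsafe x v hxv hx' hv))) h
  · -- girth
    intro hgirth
    rw [SimpleGraph.le_egirth]
    intro a w hw
    by_cases he : s(u, v) ∈ w.edges
    · -- the cycle uses the new edge
      have hus : u ∈ w.support := w.fst_mem_support_of_mem_edges he
      set c := w.rotate u hus with hc_def
      have hc : c.IsCycle := hw.rotate hus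
      have hlen : c.length = w.length := by
        have h1 := congrArg SimpleGraph.Walk.length (w.take_spec hus)
        rw [SimpleGraph.Walk.length_append] at h1
        rw [hc_def]
        unfold SimpleGraph.Walk.rotate
        rw [SimpleGraph.Walk.length_append]
        omega
      have hce : s(u, v) ∈ c.edges := (w.rotate_edges u hus).mem_iff.2 he
      have hvs : v ∈ c.support := c.snd_mem_support_of_mem_edges hce
      set p1 := c.takeUntil v hvs with hp1
      set p2 := c.dropUntil v hvs with hp2
      have hspec : p1.append p2 = c := c.take_spec hvs
      have hlen2 : p1.length + p2.length = c.length := by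
        have := congrArg SimpleGraph.Walk.length hspec
        rwa [SimpleGraph.Walk.length_append] at this
      have hedges : p1.edges ++ p2.edges = c.edges := by
        have := congrArg SimpleGraph.Walk.edges hspec
        rwa [SimpleGraph.Walk.edges_append] at this
      have hnodup : (p1.edges ++ p2.edges).Nodup := by
        rw [hedges]; exact hc.edges_nodup
      have hdisj := List.disjoint_of_nodup_append hnodup
      have hone : s(u, v) ∉ p1.edges ∨ s(u, v) ∉ p2.edges := by
        by_contra hcon
        push_neg at hcon
        exact hdisj hcon.1 hcon.2
      rcases hone with h1 | h1
      · -- p1 : Walk u v lies in Γ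
        have hd : ((g - 1 : ℕ) : ℕ∞) ≤ (p1.length : ℕ∞) := by
          have h4 : Γ.edist u v ≤ (p1.length : ℕ∞) := by
            have := Γ.edist_le (p1.transfer Γ (hedge p1 h1))
            rwa [SimpleGraph.Walk.length_transfer] at this
          exact le_trans (hsafe u v huv hu hv) h4
        have hd' : g - 1 ≤ p1.length := by exact_mod_cast hd
        have hp2pos : 1 ≤ p2.length := by
          by_contra hcon
          push_neg at hcon
          have : p2.length = 0 := by omega
          exact huv.symm (SimpleGraph.Walk.eq_of_length_eq_zero this)
        have : g ≤ w.length := by omega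
        exact_mod_cast this
      · -- p2 : Walk v u lies in Γ
        have hd : ((g - 1 : ℕ) : ℕ∞) ≤ (p2.length : ℕ∞) := by
          have h4 : Γ.edist v u ≤ (p2.length : ℕ∞) := by
            have := Γ.edist_le (p2.transfer Γ (hedge p2 h1))
            rwa [SimpleGraph.Walk.length_transfer] at this
          exact le_trans (hsafe v u huv.symm hv hu) h4
        have hd' : g - 1 ≤ p2.length := by exact_mod_cast hd
        have hp1pos : 1 ≤ p1.length := by
          by_contra hcon
          push_neg at hcon
          have : p1.length = 0 := by omega
          exact huv (SimpleGraph.Walk.eq_of_length_eq_zero this)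
        have : g ≤ w.length := by omega
        exact_mod_cast this
    · -- the cycle lies in Γ
      have hsub : ∀ e ∈ w.edges, e ∈ Γ.edgeSet := hedge w he
      have hqc : (w.transfer Γ hsub).IsCycle := hw.transfer hsub
      have := SimpleGraph.le_egirth.1 hgirth a (w.transfer Γ hsub) hqc
      rwa [SimpleGraph.Walk.length_transfer] at this
end

section
/- Let k ≥ 3 be an integer and 1/3 ≤ c < 1; set ε = c(1−c)/3, β = ε/10, α = β/100, T = (n − n^{c+ε})/2 and T_safe = (n − n^ε)/2. Let g be a natural number with 3 ≤ g ≤ c·log_{k−1}(n), let t be an integer with T ≤ t ≤ T_safe, let Γ be a graph on n vertices with every degree equal to k−1 or k and with exactly n−2t vertices of degree k−1 forming the set W, and let H be a graph on W all of whose edges are pairs at graph distance at least g−1 in Γ. Suppose Γ and H satisfy (P4): for every v ∈ W there are at most log n vertices u ∈ W with uv ∈ E(H) such that u, v are ℓ-threatened for some ℓ ≤ g−2. Set t' = ⌈(n − (n−2t)·n^{−α})/2⌉. Then in every run of the H-restricted process, for every 0 ≤ s ≤ t' − t and every vertex v of degree k−1 in G'_s, the number of edges uv ∈ E(H) with u and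 v both of degree k−1 in G'_s and dist_{G'_s}(u, v) ≥ g−1 is at least |Γ_H(v) ∩ U_s| − log n, where U_s is the set of degree-(k−1) vertices of G'_s and Γ_H(v) is the neighborhood of v in H. -/
open scoped Classical ENNReal NNReal

noncomputable section

namespace HG

variable {n : ℕ}

/-- The set `W` of vertices of degree `k - 1`. -/
def Wdeg (k : ℕ) (Γ : SimpleGraph (Fin n)) : Finset (Fin n) :=
  Finset.univ.filter fun v => Γ.degree v = k - 1

/-- The number of vertices of `W` at distance exactly `ℓ` from `v` in `Γ`. -/
def vCountW (Γ : SimpleGraph (Fin n)) (W : Finset (Fin n)) (v : Fin n) (ℓ : ℕ) : ℕ :=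
  (W.filter fun u => Γ.edist v u = (ℓ : ℕ∞)).card

/-- The number of unordered pairs of vertices of `W` at distance exactly `ℓ` in `Γ`. -/
def pCountW (Γ : SimpleGraph (Fin n)) (W : Finset (Fin n)) (ℓ : ℕ) : ℕ :=
  (Finset.univ.filter fun e : Sym2 (Fin n) =>
    ∃ u v : Fin n, e = s(u, v) ∧ u ∈ W ∧ v ∈ W ∧ Γ.edist u v = (ℓ : ℕ∞)).card

/-- `L(ℓ, t) = max {1, (k-1)^ℓ·(n - 2t)/n^(c+ε)}`. -/
def Lfun (k : ℕ) (c ε : ℝ) (n ℓ t : ℕ) : ℝ :=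
  max 1 ((k - 1 : ℝ) ^ ℓ * ((n : ℝ) - 2 * t) / (n : ℝ) ^ (c + ε))

/-- `Γ` is `C`-path-bounded at time `t` (with designated vertex set `W`). -/
def PathBoundedW (k g : ℕ) (c ε : ℝ) (t : ℕ) (C : ℝ) (Γ : SimpleGraph (Fin n))
    (W : Finset (Fin n)) : Prop :=
  (∀ v ∈ W, ∀ ℓ : ℕ, 1 ≤ ℓ → ℓ ≤ g - 2 →
    (vCountW Γ W v ℓ : ℝ) ≤ Lfun k c ε n ℓ t * Real.log n ^ C) ∧
  ∀ ℓ : ℕ, 1 ≤ ℓ → ℓ ≤ g - 2 →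
    (pCountW Γ W ℓ : ℝ) ≤ (W.card : ℝ) ^ 2 * (k - 1 : ℝ) ^ ℓ * Real.log n ^ C / n

/-- The graph `H_Γ` on `W`: its edges are the pairs of vertices of `W` at distance at
least `g - 1` in `Γ`. -/
def HGamma (k g : ℕ) (Γ : SimpleGraph (Fin n)) : SimpleGraph (Fin n) :=
  SimpleGraph.fromRel fun u v =>
    u ∈ Wdeg k Γ ∧ v ∈ Wdeg k Γ ∧ ((g - 1 : ℕ) : ℕ∞) ≤ Γ.edist u v

/-- Bernoulli measure on `Bool` (degenerate if `p > 1`, which never occurs below). -/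
def bern (p : ℝ≥0∞) : PMF Bool := if h : p ≤ 1 then PMF.ofFintype (fun b => cond b p (1 - p)) (by simp [h]) else PMF.pure true

/-- The law of independent Bernoulli(`p`) indicators, one for each potential edge. -/
def edgeMeasure (n : ℕ) (p : ℝ≥0∞) : MeasureTheory.Measure (Sym2 (Fin n) → Bool) :=
  MeasureTheory.Measure.pi fun _ => (bern p).toMeasure

/-- The binomial random subgraph of `H_Γ` determined by `ω`: each edge `e` of `H_Γ` is
retained iff `ω e = true`. -/
def randSub (k g : ℕ) (Γ : SimpleGraph (Fin n)) (ω : Sym2 (Fin n) → Bool) :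
    SimpleGraph (Fin n) :=
  SimpleGraph.fromEdgeSet {e | e ∈ (HGamma k g Γ).edgeSet ∧ ω e = true}

/-- `u, v ∈ W` are `ℓ`-threatened (with respect to `Γ` and `H`). -/
def Threatened (Γ H : SimpleGraph (Fin n)) (W : Finset (Fin n)) (ℓ : ℕ) (u v : Fin n) :
    Prop :=
  ∃ (m : ℕ) (w : ℕ → Fin n), 1 ≤ m ∧ w 0 = u ∧ w (2 * m - 1) = v ∧
    (∀ i < 2 * m, w i ∈ W) ∧
    (∀ i : ℕ, 1 ≤ i → i ≤ m - 1 → H.Adj (w (2 * i - 1)) (w (2 * i))) ∧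
    ((m : ℕ∞) - 1 + ∑ i ∈ Finset.range m, Γ.edist (w (2 * i)) (w (2 * i + 1))) = (ℓ : ℕ∞)

/-- `T_ℓ`: the number of `ℓ`-threatened unordered pairs. -/
def threatPairs (Γ H : SimpleGraph (Fin n)) (W : Finset (Fin n)) (ℓ : ℕ) : ℕ :=
  (Finset.univ.filter fun e : Sym2 (Fin n) =>
    ∃ u v : Fin n, u ≠ v ∧ e = s(u, v) ∧ Threatened Γ H W ℓ u v).card

/-- `T_ℓ(v)`: the number of `ℓ`-threatened pairs containing `v`. -/
def threatAt (Γ H : SimpleGraph (Fin n)) (W : Finset (Fin n)) (ℓ : ℕ) (v : Fin n) : ℕ :=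
  (Finset.univ.filter fun u : Fin n => u ≠ v ∧ Threatened Γ H W ℓ u v).card

/-- `e(H[S])`: the number of edges of `H` with both endpoints in `S`. -/
def eIn (H : SimpleGraph (Fin n)) (S : Finset (Fin n)) : ℕ :=
  (Finset.univ.filter fun e : Sym2 (Fin n) => e ∈ H.edgeSet ∧ ∀ v ∈ e, v ∈ S).card

/-- Conclusions (P1)–(P5), with parameter `Q`, for the pair `(Γ, H)`
(here `β = ε/10` and `W = Wdeg k Γ`). -/
def Props (k g : ℕ) (c ε : ℝ) (t : ℕ) (Q : ℝ) (Γ H : SimpleGraph (Fin n)) : Prop :=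
  (∀ v ∈ Wdeg k Γ,
    |(H.degree v : ℝ) - (n : ℝ) ^ (ε / 10)| ≤
      (n : ℝ) ^ (-(0.4 * (ε / 10))) * (n : ℝ) ^ (ε / 10)) ∧
  (∀ ℓ : ℕ, ℓ ≤ g - 2 →
    (threatPairs Γ H (Wdeg k Γ) ℓ : ℝ) ≤
      ((Wdeg k Γ).card : ℝ) ^ 2 * (k - 1 : ℝ) ^ ℓ * Real.log n ^ Q / n) ∧
  (∀ v ∈ Wdeg k Γ, ∀ ℓ : ℕ, ℓ ≤ g - 2 →
    (threatAt Γ H (Wdeg k Γ) ℓ v : ℝ) ≤ Lfun k c ε n ℓ t * Real.log n ^ Q) ∧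
  (∀ v ∈ Wdeg k Γ,
    (((Wdeg k Γ).filter fun u =>
        H.Adj u v ∧ ∃ ℓ : ℕ, ℓ ≤ g - 2 ∧ Threatened Γ H (Wdeg k Γ) ℓ u v).card : ℝ) ≤
      Real.log n) ∧
  (∀ S ⊆ Wdeg k Γ, (S.card : ℝ) ≤ ((Wdeg k Γ).card : ℝ) / (n : ℝ) ^ (ε / 2) →
    (eIn H S : ℝ) ≤ (S.card : ℝ) * (n : ℝ) ^ (0.9 * (ε / 10)))

end HG

namespace HG

variable {n : ℕ}

/-- Ordered pairs `(u, v)` forming an edge of `H` with both endpoints of degree `k-1`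
in the current graph `Γ` and at distance at least `g-1` in `Γ`. -/
def ravail (k g : ℕ) (H Γ : SimpleGraph (Fin n)) : Finset (Fin n × Fin n) :=
  Finset.univ.filter fun p =>
    H.Adj p.1 p.2 ∧ Γ.degree p.1 = k - 1 ∧ Γ.degree p.2 = k - 1 ∧
      ((g - 1 : ℕ) : ℕ∞) ≤ Γ.edist p.1 p.2

/-- One step of the `H`-restricted process.  (The uniform choice is made over ordered
pairs, which induces the uniform distribution over the eligible edges of `H`.) -/
def rstep (k g : ℕ) (H Γ : SimpleGraph (Fin n)) : PMF (SimpleGraph (Fin n)) :=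
  if h : ravail k g H Γ = ∅ then PMF.pure Γ
  else (PMF.uniformOfFinset (ravail k g H Γ) (Finset.nonempty_iff_ne_empty.2 h)).map
    fun p => addEdge Γ p.1 p.2

/-- The distribution of the trajectory `(G'_0, …, G'_T)` of the `H`-restricted process
started at `Γ`, recorded as a function `ℕ → SimpleGraph (Fin n)`. -/
def rtraj (k g : ℕ) (H Γ : SimpleGraph (Fin n)) : ℕ → PMF (ℕ → SimpleGraph (Fin n))
  | 0 => PMF.pure fun _ => Γ
  | T + 1 => (rtraj k g H Γ T).bind fun f =>
      (rstep k g H (f T)).map fun Δ => Function.update f (T + 1) Δ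

/-- `f` is a run of the `H`-restricted process started at `Γ`. -/
def IsRRun (k g : ℕ) (H Γ : SimpleGraph (Fin n)) (f : ℕ → SimpleGraph (Fin n)) : Prop :=
  f 0 = Γ ∧ ∀ s : ℕ,
    if ravail k g H (f s) = ∅ then f (s + 1) = f s
    else ∃ p ∈ ravail k g H (f s), f (s + 1) = addEdge (f s) p.1 p.2

end HG

namespace HGaux

variable {n : ℕ}

lemma threat_of_walk (Γ H : SimpleGraph (Fin n)) (W : Finset (Fin n))
    (hHW : ∀ a b : Fin n, H.Adj a b → a ∈ W ∧ b ∈ W) :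
    ∀ {x v : Fin n} (p : (Γ ⊔ H).Walk x v), v ∈ W →
      ∃ ℓ : ℕ, ℓ ≤ p.length ∧ ∃ (m : ℕ) (w : ℕ → Fin n), 1 ≤ m ∧ w 0 = x ∧
        w (2 * m - 1) = v ∧
        (∀ i, 1 ≤ i → i < 2 * m → w i ∈ W) ∧
        (∀ i : ℕ, 1 ≤ i → i ≤ m - 1 → H.Adj (w (2 * i - 1)) (w (2 * i))) ∧
        ((m : ℕ∞) - 1 + ∑ i ∈ Finset.range m, Γ.edist (w (2 * i)) (w (2 * i + 1)))
          = (ℓ : ℕ∞) := by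
  intro x v p
  induction p with
  | @nil z =>
    intro hv
    refine ⟨0, le_refl _, 1, fun _ => z, le_refl _, rfl, rfl, ?_, ?_, ?_⟩
    · intro i _ _; exact hv
    · intro i h1 h2; omega
    · simp [SimpleGraph.edist_self]
  | @cons x y v h q ih =>
    intro hv
    obtain ⟨ℓ, hℓ, m, w, hm, hw0, hwv, hwW, hwH, hsum⟩ := ih hv
    rcases h with hΓ | hH'
    · -- the first edge is a Γ-edge: modify the first segment
      set w' : ℕ → Fin n := fun i => if i = 0 then x else w i with hw'def
      have hxy : Γ.edist x y ≤ 1 := by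
        have := SimpleGraph.edist_le (SimpleGraph.Walk.cons hΓ SimpleGraph.Walk.nil)
        simpa using this
      have hsum' : ∑ i ∈ Finset.range m, Γ.edist (w' (2 * i)) (w' (2 * i + 1))
          ≤ 1 + ∑ i ∈ Finset.range m, Γ.edist (w (2 * i)) (w (2 * i + 1)) := by
        have h0 : (0 : ℕ) ∈ Finset.range m := Finset.mem_range.2 hm
        rw [← Finset.add_sum_erase _ _ h0, ← Finset.add_sum_erase _ _ h0]
        have hrest : ∑ i ∈ (Finset.range m).erase 0, Γ.edist (w' (2 * i)) (w' (2 * i + 1))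
            = ∑ i ∈ (Finset.range m).erase 0, Γ.edist (w (2 * i)) (w (2 * i + 1)) := by
          refine Finset.sum_congr rfl fun i hi => ?_
          have hi0 : i ≠ 0 := (Finset.mem_erase.1 hi).1
          have h1 : 2 * i ≠ 0 := by omega
          simp [hw'def, h1]
        rw [hrest]
        have hfirst : Γ.edist (w' 0) (w' 1) ≤ 1 + Γ.edist (w 0) (w 1) := by
          have : Γ.edist x (w 1) ≤ Γ.edist x y + Γ.edist y (w 1) :=
            SimpleGraph.edist_triangle
          calc Γ.edist (w' 0) (w' 1) = Γ.edist x (w 1) := by simp [hw'def]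
            _ ≤ Γ.edist x y + Γ.edist y (w 1) := this
            _ ≤ 1 + Γ.edist (w 0) (w 1) := by rw [hw0]; exact add_le_add_left hxy _
        calc Γ.edist (w' (2*0)) (w' (2*0+1))
              + ∑ i ∈ (Finset.range m).erase 0, Γ.edist (w (2 * i)) (w (2 * i + 1))
            = Γ.edist (w' 0) (w' 1)
              + ∑ i ∈ (Finset.range m).erase 0, Γ.edist (w (2 * i)) (w (2 * i + 1)) := by
              norm_num
          _ ≤ (1 + Γ.edist (w 0) (w 1))
              + ∑ i ∈ (Finset.range m).erase 0, Γ.edist (w (2 * i)) (w (2 * i + 1)) :=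
              add_le_add_left hfirst _
          _ = 1 + (Γ.edist (w (2*0)) (w (2*0+1))
              + ∑ i ∈ (Finset.range m).erase 0, Γ.edist (w (2 * i)) (w (2 * i + 1))) := by
              rw [add_assoc]
      have hS'le : (m : ℕ∞) - 1 + ∑ i ∈ Finset.range m, Γ.edist (w' (2 * i)) (w' (2 * i + 1))
          ≤ (ℓ : ℕ∞) + 1 := by
        calc (m : ℕ∞) - 1 + ∑ i ∈ Finset.range m, Γ.edist (w' (2 * i)) (w' (2 * i + 1))
            ≤ (m : ℕ∞) - 1 + (1 + ∑ i ∈ Finset.range m, Γ.edist (w (2 * i)) (w (2 * i + 1))) :=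
              add_le_add_right hsum' _
          _ = ((m : ℕ∞) - 1 + ∑ i ∈ Finset.range m, Γ.edist (w (2 * i)) (w (2 * i + 1))) + 1 := by
              ring
          _ = (ℓ : ℕ∞) + 1 := by rw [hsum]
      have hfin : (m : ℕ∞) - 1 + ∑ i ∈ Finset.range m, Γ.edist (w' (2 * i)) (w' (2 * i + 1)) ≠ ⊤ :=
        by
          intro htop
          rw [htop] at hS'le
          have h2 : ((ℓ + 1 : ℕ) : ℕ∞) = ⊤ := by
            rw [top_le_iff] at hS'le
            exact_mod_cast hS'le
          exact ENat.coe_ne_top _ h2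
      refine ⟨((m : ℕ∞) - 1 + ∑ i ∈ Finset.range m,
          Γ.edist (w' (2 * i)) (w' (2 * i + 1))).toNat, ?_, m, w', hm, by simp [hw'def], ?_, ?_, ?_, ?_⟩
      · have : (((m : ℕ∞) - 1 + ∑ i ∈ Finset.range m,
            Γ.edist (w' (2 * i)) (w' (2 * i + 1))).toNat : ℕ∞) ≤ ((ℓ + 1 : ℕ) : ℕ∞) := by
          rw [ENat.coe_toNat hfin]; exact_mod_cast hS'le
        have := (Nat.cast_le (α := ℕ∞)).mp this
        simpa [SimpleGraph.Walk.length_cons] using le_trans this (by omega)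
      · have : 2 * m - 1 ≠ 0 := by omega
        simp [hw'def, this, hwv]
      · intro i h1 h2
        have : i ≠ 0 := by omega
        simpa [hw'def, this] using hwW i h1 h2
      · intro i h1 h2
        have e1 : 2 * i - 1 ≠ 0 := by omega
        have e2 : 2 * i ≠ 0 := by omega
        simpa [hw'def, e1, e2] using hwH i h1 h2
      · exact (ENat.coe_toNat hfin).symm
    · -- the first edge is an H-edge: prepend a trivial segment and this H-edge
      set w' : ℕ → Fin n := fun i => if i ≤ 1 then x else w (i - 2) with hw'def
      have hsum' : ∑ i ∈ Finset.range (m + 1), Γ.edist (w' (2 * i)) (w' (2 * i + 1))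
          = ∑ i ∈ Finset.range m, Γ.edist (w (2 * i)) (w (2 * i + 1)) := by
        rw [Finset.sum_range_succ']
        have h0 : Γ.edist (w' (2 * 0)) (w' (2 * 0 + 1)) = 0 := by
          simp [hw'def, SimpleGraph.edist_self]
        rw [h0, add_zero]
        refine Finset.sum_congr rfl fun i _ => ?_
        have e1 : ¬ (2 * (i + 1) ≤ 1) := by omega
        have e2 : ¬ (2 * (i + 1) + 1 ≤ 1) := by omega
        have e3 : 2 * (i + 1) - 2 = 2 * i := by omega
        have e4 : 2 * (i + 1) + 1 - 2 = 2 * i + 1 := by omega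
        simp [hw'def, e1, e2, e3, e4]
      have hm1 : ((m : ℕ∞) - 1) + 1 = (m : ℕ∞) :=
        tsub_add_cancel_of_le (by exact_mod_cast hm)
      refine ⟨ℓ + 1, by simpa [SimpleGraph.Walk.length_cons] using Nat.add_le_add_right hℓ 1,
        m + 1, w', by omega, by simp [hw'def], ?_, ?_, ?_, ?_⟩
      · have e1 : ¬ (2 * (m + 1) - 1 ≤ 1) := by omega
        have e2 : 2 * (m + 1) - 1 - 2 = 2 * m - 1 := by omega
        simp [hw'def, e1, e2, hwv]
      · intro i h1 h2
        rcases Nat.lt_or_ge i 2 with hi | hi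
        · have : i = 1 := by omega
          subst this
          simp only [hw'def, if_pos (le_refl 1)]
          exact (hHW x y hH').1
        · have e1 : ¬ (i ≤ 1) := by omega
          rcases Nat.eq_or_lt_of_le hi with hi2 | hi2
          · have : i - 2 = 0 := by omega
            simp only [hw'def, if_neg e1, this, hw0]
            exact (hHW x y hH').2
          · have : 1 ≤ i - 2 := by omega
            have h2' : i - 2 < 2 * m := by omega
            simpa [hw'def, e1] using hwW (i - 2) this h2'
      · intro i h1 h2
        rcases Nat.eq_or_lt_of_le h1 with hi | hi
        · subst hi
          have e1 : (2 * 1 - 1 : ℕ) ≤ 1 := by omega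
          have e2 : ¬ ((2 * 1 : ℕ) ≤ 1) := by omega
          have e3 : (2 * 1 - 2 : ℕ) = 0 := by omega
          simp only [hw'def, if_pos e1, if_neg e2, e3, hw0]
          exact hH'
        · have hge : 2 ≤ i := hi
          have e1 : ¬ (2 * i - 1 ≤ 1) := by omega
          have e2 : ¬ (2 * i ≤ 1) := by omega
          have e3 : 2 * i - 1 - 2 = 2 * (i - 1) - 1 := by omega
          have e4 : 2 * i - 2 = 2 * (i - 1) := by omega
          simp only [hw'def, if_neg e1, if_neg e2, e3, e4]
          exact hwH (i - 1) (by omega) (by omega)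
      · rw [hsum']
        have : ((m + 1 : ℕ) : ℕ∞) - 1 = (m : ℕ∞) := by
          have h := ENat.coe_sub (m + 1) 1
          simpa using h.symm
        rw [this, ← hm1, add_right_comm, hsum]
        push_cast
        rfl

end HGaux

/-- Under hypothesis (P4), in every run of the `H`-restricted
process, for every `0 ≤ s ≤ t' - t` and every vertex `v` of degree `k-1` in `G'_s`,
the number of edges `uv ∈ E(H)` with both ends of degree `k-1` in `G'_s` and
`dist_{G'_s}(u,v) ≥ g-1` is at least `|Γ_H(v) ∩ U_s| - log n`. -/
theorem most_neighbors_available (k : ℕ) (hk : 3 ≤ k) (c : ℝ)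
    (hc0 : 1 / 3 ≤ c) (hc1 : c < 1) (n : ℕ) (hn : Even n)
    (g : ℕ) (hg3 : 3 ≤ g) (hgle : (g : ℝ) ≤ c * Real.log n / Real.log (k - 1))
    (t : ℕ)
    (htlo : ((n : ℝ) - (n : ℝ) ^ (c + c * (1 - c) / 3)) / 2 ≤ (t : ℝ))
    (hthi : (t : ℝ) ≤ ((n : ℝ) - (n : ℝ) ^ (c * (1 - c) / 3)) / 2)
    (t' : ℕ)
    (ht' : t' = ⌈((n : ℝ) -
      ((n : ℝ) - 2 * t) * (n : ℝ) ^ (-(c * (1 - c) / 3 / 10 / 100))) / 2⌉₊)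
    (Γ : SimpleGraph (Fin n))
    (hdeg : ∀ v : Fin n, Γ.degree v = k - 1 ∨ Γ.degree v = k)
    (hW : (HG.Wdeg k Γ).card = n - 2 * t)
    (H : SimpleGraph (Fin n))
    (hH : ∀ u v : Fin n, H.Adj u v →
      u ∈ HG.Wdeg k Γ ∧ v ∈ HG.Wdeg k Γ ∧ ((g - 1 : ℕ) : ℕ∞) ≤ Γ.edist u v)
    (hP4 : ∀ v ∈ HG.Wdeg k Γ,
      (((HG.Wdeg k Γ).filter fun u =>
          H.Adj u v ∧ ∃ ℓ : ℕ, ℓ ≤ g - 2 ∧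
            HG.Threatened Γ H (HG.Wdeg k Γ) ℓ u v).card : ℝ) ≤ Real.log n)
    (f : ℕ → SimpleGraph (Fin n)) (hf : HG.IsRRun k g H Γ f) :
    ∀ s : ℕ, s ≤ t' - t → ∀ v : Fin n, (f s).degree v = k - 1 →
      ((Finset.univ.filter fun u : Fin n =>
          H.Adj v u ∧ (f s).degree u = k - 1 ∧
            ((g - 1 : ℕ) : ℕ∞) ≤ (f s).edist v u).card : ℝ) ≥
        ((Finset.univ.filter fun u : Fin n =>
            H.Adj v u ∧ (f s).degree u = k - 1).card : ℝ) - Real.log n := by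
  classical
  have key : ∀ s : ℕ, Γ ≤ f s ∧ f s ≤ Γ ⊔ H := by
    intro s
    induction s with
    | zero => rw [hf.1]; exact ⟨le_refl _, le_sup_left⟩
    | succ s ih =>
      have hstep := hf.2 s
      by_cases h : HG.ravail k g H (f s) = ∅
      · rw [if_pos h] at hstep; rw [hstep]; exact ih
      · rw [if_neg h] at hstep
        obtain ⟨p, hp, heq⟩ := hstep
        have hadj : H.Adj p.1 p.2 := (Finset.mem_filter.1 hp).2.1
        rw [heq]
        refine ⟨le_trans ih.1 le_sup_left, sup_le ih.2 ?_⟩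
        intro a b hab
        rw [SimpleGraph.fromEdgeSet_adj] at hab
        obtain ⟨hmem, hne⟩ := hab
        simp only [Set.mem_singleton_iff, Sym2.eq, Sym2.rel_iff', Prod.mk.injEq,
          Prod.swap_prod_mk] at hmem
        rcases hmem with ⟨rfl, rfl⟩ | ⟨rfl, rfl⟩
        · exact Or.inr hadj
        · exact Or.inr hadj.symm
  intro s hs v hv
  have hdegmono : ∀ u : Fin n, Γ.degree u ≤ (f s).degree u := by
    intro u
    apply Finset.card_le_card
    intro a ha
    rw [SimpleGraph.mem_neighborFinset] at ha ⊢
    exact (key s).1 ha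
  have hWmem : ∀ u : Fin n, (f s).degree u = k - 1 → u ∈ HG.Wdeg k Γ := by
    intro u hu
    have h1 : Γ.degree u ≤ k - 1 := hu ▸ hdegmono u
    rcases hdeg u with h | h
    · simp [HG.Wdeg, h]
    · exfalso; omega
  set B := Finset.univ.filter (fun u : Fin n => H.Adj v u ∧ (f s).degree u = k - 1 ∧
      ¬ ((g - 1 : ℕ) : ℕ∞) ≤ (f s).edist v u) with hB
  have hBsub : B ⊆ (HG.Wdeg k Γ).filter (fun u => H.Adj u v ∧ ∃ ℓ : ℕ, ℓ ≤ g - 2 ∧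
      HG.Threatened Γ H (HG.Wdeg k Γ) ℓ u v) := by
    intro u hu
    rw [hB, Finset.mem_filter] at hu
    obtain ⟨-, hadj, hdegu, hdist⟩ := hu
    have huW : u ∈ HG.Wdeg k Γ := hWmem u hdegu
    have hvW : v ∈ HG.Wdeg k Γ := hWmem v hv
    refine Finset.mem_filter.2 ⟨huW, hadj.symm, ?_⟩
    have hlt : (f s).edist u v < ((g - 1 : ℕ) : ℕ∞) := by
      rw [SimpleGraph.edist_comm]; exact lt_of_not_ge hdist
    have hne : (f s).edist u v ≠ ⊤ := (lt_of_lt_of_le hlt le_top).ne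
    obtain ⟨p, hplen⟩ := SimpleGraph.exists_walk_of_edist_ne_top hne
    have hplen2 : p.length ≤ g - 2 := by
      have h1 : ((p.length : ℕ) : ℕ∞) < ((g - 1 : ℕ) : ℕ∞) := by rw [hplen]; exact hlt
      have h2 : p.length < g - 1 := Nat.cast_lt.mp h1
      omega
    obtain ⟨ℓ, hℓ, m, w, hm, hw0, hwv, hwW, hwH, hsum⟩ :=
      HGaux.threat_of_walk Γ H (HG.Wdeg k Γ)
        (fun a b hab => ⟨(hH a b hab).1, (hH a b hab).2.1⟩)
        (p.mapLe (key s).2) hvW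
    have hlen : (p.mapLe (key s).2).length = p.length := by simp
    refine ⟨ℓ, by omega, m, w, hm, hw0, hwv, ?_, hwH, hsum⟩
    intro i hi
    rcases Nat.eq_zero_or_pos i with rfl | hpos
    · rw [hw0]; exact huW
    · exact hwW i hpos hi
  have hBcard : (B.card : ℝ) ≤ Real.log n :=
    le_trans (Nat.cast_le.2 (Finset.card_le_card hBsub)) (hP4 v (hWmem v hv))
  set A1 := Finset.univ.filter (fun u : Fin n => H.Adj v u ∧ (f s).degree u = k - 1 ∧
      ((g - 1 : ℕ) : ℕ∞) ≤ (f s).edist v u) with hA1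
  set A2 := Finset.univ.filter (fun u : Fin n => H.Adj v u ∧ (f s).degree u = k - 1) with hA2
  have hsub : A2 ⊆ A1 ∪ B := by
    intro u hu
    rw [hA2, Finset.mem_filter] at hu
    by_cases hd : ((g - 1 : ℕ) : ℕ∞) ≤ (f s).edist v u
    · exact Finset.mem_union_left _ (Finset.mem_filter.2 ⟨Finset.mem_univ _, hu.2.1, hu.2.2, hd⟩)
    · exact Finset.mem_union_right _ (Finset.mem_filter.2 ⟨Finset.mem_univ _, hu.2.1, hu.2.2, hd⟩)
  have h1 : A2.card ≤ A1.card + B.card :=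
    le_trans (Finset.card_le_card hsub) (Finset.card_union_le _ _)
  have h2 : (A2.card : ℝ) ≤ (A1.card : ℝ) + (B.card : ℝ) := by exact_mod_cast h1
  linarith
end
end
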